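/- arXiv:1910.13809 — 4 statements merged into one kernel-verified Lean document; each statement's English description precedes it below -/
import Mathlib

section
/- For all n ≥ 2 and k ≥ 0, the number of permutations σ of [n] avoiding 123 and 213 with σ(n) = 2 and crs(σ) = k equals the binomial coefficient C(n−2, k). -/
open scoped Classical

/-- The number of crossings of a permutation: pairs (i,j) with
i < j < σ(i) < σ(j) or σ(i) < σ(j) ≤ i < j. -/
noncomputable def crs {n : ℕ} (σ : Equiv.Perm (Fin n)) : ℕ :=
  (Finset.univ.filter (fun p : Fin n × Fin n =>
    (p.1 < p.2 ∧ p.2 < σ p.1 ∧ σ p.1 < σ p.2) ∨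
    (σ p.1 < σ p.2 ∧ σ p.2 ≤ p.1 ∧ p.1 < p.2))).card

/-- Number of upper transients: i with σ⁻¹(i) < i < σ(i). -/
noncomputable def utCount {n : ℕ} (σ : Equiv.Perm (Fin n)) : ℕ :=
  (Finset.univ.filter (fun i : Fin n => σ.symm i < i ∧ i < σ i)).card

/-- Number of lower transients: i with σ(i) < i < σ⁻¹(i). -/
noncomputable def ltCount {n : ℕ} (σ : Equiv.Perm (Fin n)) : ℕ :=
  (Finset.univ.filter (fun i : Fin n => σ i < i ∧ i < σ.symm i)).card

/-- σ contains the pattern τ. -/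
def Contains {n k : ℕ} (σ : Equiv.Perm (Fin n)) (τ : Fin k → ℕ) : Prop :=
  ∃ f : Fin k → Fin n, StrictMono f ∧ ∀ x y, σ (f x) < σ (f y) ↔ τ x < τ y

/-- σ avoids the pattern τ. -/
def Avoids {n k : ℕ} (σ : Equiv.Perm (Fin n)) (τ : Fin k → ℕ) : Prop :=
  ¬ Contains σ τ

def p123 : Fin 3 → ℕ := ![1, 2, 3]
def p132 : Fin 3 → ℕ := ![1, 3, 2]
def p213 : Fin 3 → ℕ := ![2, 1, 3]
def p231 : Fin 3 → ℕ := ![2, 3, 1]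
def p312 : Fin 3 → ℕ := ![3, 1, 2]
def p321 : Fin 3 → ℕ := ![3, 2, 1]

/-- Generating polynomial of crs over permutations of [n] satisfying P. -/
noncomputable def Fpoly (n : ℕ) (P : Equiv.Perm (Fin n) → Prop) : Polynomial ℤ :=
  ∑ σ : Equiv.Perm (Fin n), if P σ then Polynomial.X ^ crs σ else 0


namespace CrsAux

/-- largest element of M below u, or 0 -/
def prevF (M : Finset ℕ) (u : ℕ) : ℕ := (M.filter (· < u)).sup id

lemma prevF_lt (M : Finset ℕ) (u : ℕ) (hu : 0 < u) : prevF M u < u := by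
  unfold prevF
  rw [Finset.sup_lt_iff (by simpa using hu)]
  intro a ha
  exact (Finset.mem_filter.mp ha).2

lemma prevF_mem (M : Finset ℕ) (u : ℕ) : prevF M u = 0 ∨ prevF M u ∈ M := by
  rcases (M.filter (· < u)).eq_empty_or_nonempty with h | h
  · left; unfold prevF; rw [h]; rfl
  · right
    obtain ⟨b, hb, hbe⟩ := Finset.exists_mem_eq_sup _ h id
    unfold prevF; rw [hbe]
    exact (Finset.mem_filter.mp hb).1

lemma le_prevF (M : Finset ℕ) {a u : ℕ} (ha : a ∈ M) (hau : a < u) : a ≤ prevF M u :=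
  Finset.le_sup (f := id) (Finset.mem_filter.mpr ⟨ha, hau⟩)

def sigmaFun (n : ℕ) (M : Finset ℕ) (p : ℕ) : ℕ :=
  if (n - p) ∈ M ∨ n - p = n then prevF M (n - p) else n - p

lemma sigmaFun_lt (n : ℕ) (M : Finset ℕ) (p : ℕ) (hp : p < n) : sigmaFun n M p < n := by
  unfold sigmaFun
  split
  · exact lt_of_lt_of_le (prevF_lt M _ (by omega)) (by omega)
  · next h => push_neg at h; omega


lemma sigmaVal_aux (n : ℕ) (M : Finset ℕ) (u w : ℕ) (h1 : 1 ≤ u) (h2 : u ≤ n)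
    (h3 : 1 ≤ w) (h4 : w ≤ n) (hlt : u < w)
    (h : (if u ∈ M ∨ u = n then prevF M u else u) = (if w ∈ M ∨ w = n then prevF M w else w)) :
    False := by
  rcases Classical.em (u ∈ M ∨ u = n) with hcu | hcu <;>
    rcases Classical.em (w ∈ M ∨ w = n) with hcw | hcw
  · rw [if_pos hcu, if_pos hcw] at h
    -- u ∈ M (since u < w ≤ n), so prevF M w ≥ u > prevF M u
    have humem : u ∈ M := by rcases hcu with h' | h'; exact h'; omega
    have := le_prevF M humem hlt
    have := prevF_lt M u h1
    omega
  · rw [if_pos hcu, if_neg hcw] at h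
    -- prevF M u = w  but prevF M u < u < w
    have := prevF_lt M u h1
    omega
  · rw [if_neg hcu, if_pos hcw] at h
    -- u = prevF M w : prevF M w ∈ M ∪ {0}, u ∉ M, u ≥ 1
    rcases prevF_mem M w with h0 | hm
    · omega
    · rw [← h] at hm; exact hcu (Or.inl hm)
  · rw [if_neg hcu, if_neg hcw] at h; omega

lemma sigmaFun_inj (n : ℕ) (M : Finset ℕ) (p q : ℕ) (hp : p < n) (hq : q < n)
    (h : sigmaFun n M p = sigmaFun n M q) : p = q := by
  unfold sigmaFun at h
  by_contra hne
  rcases Nat.lt_or_ge p q with hlt | hge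
  · exact sigmaVal_aux n M (n - q) (n - p) (by omega) (by omega) (by omega) (by omega) (by omega) h.symm
  · exact sigmaVal_aux n M (n - p) (n - q) (by omega) (by omega) (by omega) (by omega) (by omega) h

noncomputable def sigmaPerm (n : ℕ) (M : Finset ℕ) : Equiv.Perm (Fin n) :=
  Equiv.ofBijective (fun p => ⟨sigmaFun n M p.1, sigmaFun_lt n M p.1 p.2⟩)
    (Finite.injective_iff_bijective.mp (fun p q h => by
      have := sigmaFun_inj n M p.1 q.1 p.2 q.2 (congrArg Fin.val h)
      exact Fin.ext this))

lemma sigmaPerm_apply (n : ℕ) (M : Finset ℕ) (p : Fin n) :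
    (sigmaPerm n M p : ℕ) = sigmaFun n M p.1 := rfl


lemma strictMono3 {n : ℕ} {i j k : Fin n} (hij : i < j) (hjk : j < k) :
    StrictMono ![i, j, k] := by
  intro a b hab
  fin_cases a <;> fin_cases b <;>
    first
      | exact absurd hab (by decide)
      | simpa using hij
      | simpa using hjk
      | simpa using hij.trans hjk

lemma contains_p123 {n : ℕ} (σ : Equiv.Perm (Fin n)) {i j k : Fin n}
    (hij : i < j) (hjk : j < k) (h1 : σ i < σ j) (h2 : σ j < σ k) : Contains σ p123 := by
  refine ⟨![i, j, k], strictMono3 hij hjk, ?_⟩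
  intro x y
  fin_cases x <;> fin_cases y <;>
    simp only [Matrix.cons_val_zero, Matrix.cons_val_one, Matrix.head_cons,
      Matrix.cons_val_two, Matrix.tail_cons, p123] <;>
    norm_num <;>
    first
      | exact h1
      | exact h2
      | exact h1.trans h2
      | exact lt_irrefl _
      | exact asymm h1
      | exact asymm h2
      | exact asymm (h1.trans h2)
      | exact le_of_lt h1
      | exact le_of_lt h2
      | exact le_of_lt (h1.trans h2)

lemma contains_p213 {n : ℕ} (σ : Equiv.Perm (Fin n)) {i j k : Fin n}
    (hij : i < j) (hjk : j < k) (h1 : σ j < σ i) (h2 : σ i < σ k) : Contains σ p213 := by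
  refine ⟨![i, j, k], strictMono3 hij hjk, ?_⟩
  intro x y
  fin_cases x <;> fin_cases y <;>
    simp only [Matrix.cons_val_zero, Matrix.cons_val_one, Matrix.head_cons,
      Matrix.cons_val_two, Matrix.tail_cons, p213] <;>
    norm_num <;>
    first
      | exact h1
      | exact h2
      | exact h1.trans h2
      | exact h1.trans h2
      | exact lt_irrefl _
      | exact asymm h1
      | exact asymm h2
      | exact asymm (h1.trans h2)
      | exact le_of_lt h1
      | exact le_of_lt h2
      | exact le_of_lt (h1.trans h2)

/-- For a permutation avoiding 123 and 213, no position has two smaller values before it. -/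
lemma uniq_of_avoids {n : ℕ} {σ : Equiv.Perm (Fin n)}
    (hA : Avoids σ p123) (hB : Avoids σ p213) {i j k : Fin n}
    (hij : i < j) (hjk : j < k) (h1 : σ i < σ k) (h2 : σ j < σ k) : False := by
  rcases lt_trichotomy (σ i) (σ j) with h | h | h
  · exact hA (contains_p123 σ hij hjk h h2)
  · exact absurd (σ.injective h) (by intro hh; subst hh; exact lt_irrefl _ hij)
  · exact hB (contains_p213 σ hij hjk h h1)

/-- Key structural fact for sigmaPerm : at most one earlier smaller value. -/
lemma sigma_uniq (n : ℕ) (M : Finset ℕ) {i j k : Fin n}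
    (hij : i < j) (hjk : j < k)
    (h1 : sigmaPerm n M i < sigmaPerm n M k) (h2 : sigmaPerm n M j < sigmaPerm n M k) :
    False := by
  have hi := i.2; have hj := j.2; have hk := k.2
  have hij' : (i : ℕ) < j := hij
  have hjk' : (j : ℕ) < k := hjk
  have h1' : sigmaFun n M i < sigmaFun n M k := h1
  have h2' : sigmaFun n M j < sigmaFun n M k := h2
  unfold sigmaFun at h1' h2'
  set u1 := n - (i : ℕ) with hu1
  set u2 := n - (j : ℕ) with hu2
  set w := n - (k : ℕ) with hww
  -- σ k ≤ w
  have hσk : (if w ∈ M ∨ w = n then prevF M w else w) ≤ w := by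
    split
    · exact le_of_lt (prevF_lt M w (by omega))
    · exact le_rfl
  -- j must be a chain position
  rcases Classical.em (u2 ∈ M ∨ u2 = n) with hc2 | hc2
  · rcases Classical.em (u1 ∈ M ∨ u1 = n) with hc1 | hc1
    · rw [if_pos hc1] at h1'
      rw [if_pos hc2] at h2'
      have hu2M : u2 ∈ M := by rcases hc2 with h' | h'; exact h'; omega
      have := le_prevF M hu2M (show u2 < u1 by omega)
      have := prevF_lt M u2 (by omega)
      omega
    · rw [if_neg hc1] at h1'
      omega
  · rw [if_neg hc2] at h2'
    omega

lemma sigma_avoids123 (n : ℕ) (M : Finset ℕ) : Avoids (sigmaPerm n M) p123 := by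
  rintro ⟨f, hf, hiff⟩
  have h02 : sigmaPerm n M (f 0) < sigmaPerm n M (f 2) := (hiff 0 2).mpr (by norm_num [p123, Matrix.cons_val_two])
  have h12 : sigmaPerm n M (f 1) < sigmaPerm n M (f 2) := (hiff 1 2).mpr (by norm_num [p123, Matrix.cons_val_two])
  exact sigma_uniq n M (hf (by decide : (0:Fin 3) < 1)) (hf (by decide : (1:Fin 3) < 2)) h02 h12

lemma sigma_avoids213 (n : ℕ) (M : Finset ℕ) : Avoids (sigmaPerm n M) p213 := by
  rintro ⟨f, hf, hiff⟩
  have h02 : sigmaPerm n M (f 0) < sigmaPerm n M (f 2) := (hiff 0 2).mpr (by norm_num [p213, Matrix.cons_val_two])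
  have h12 : sigmaPerm n M (f 1) < sigmaPerm n M (f 2) := (hiff 1 2).mpr (by norm_num [p213, Matrix.cons_val_two])
  exact sigma_uniq n M (hf (by decide : (0:Fin 3) < 1)) (hf (by decide : (1:Fin 3) < 2)) h02 h12

lemma sigma_last (n : ℕ) (M : Finset ℕ) (hn : 2 ≤ n) (hM : M ⊆ Finset.Icc 2 (n-1)) :
    ((sigmaPerm n M) ⟨n - 1, Nat.sub_one_lt (by omega)⟩ : ℕ) = 1 := by
  have h1 : (1 : ℕ) ∉ M := fun h => by have := Finset.mem_Icc.mp (hM h); omega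
  show sigmaFun n M (n-1) = 1
  unfold sigmaFun
  have : n - (n-1) = 1 := by omega
  rw [this, if_neg (by push_neg; exact ⟨h1, by omega⟩)]

def fM (n : ℕ) (M : Finset ℕ) : ℕ :=
  ((Finset.Icc 1 (n-1)).filter
    (fun v => v ∉ M ∧ ∃ a ∈ M, (v < a ∧ a ≤ n-v) ∨ (n-v < a ∧ a ≤ v))).card

def Shape (n : ℕ) (M : Finset ℕ) (u w : ℕ) : Prop :=
  (u ∈ M ∨ u = n) ∧ w ∉ M ∧ w ≠ n ∧ prevF M u < w ∧ w < u ∧ (w ≤ n - u ∨ n - w < prevF M u)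

lemma P_shape (n : ℕ) (M : Finset ℕ) (p q : Fin n) :
    ((p < q ∧ q < sigmaPerm n M p ∧ sigmaPerm n M p < sigmaPerm n M q) ∨
     (sigmaPerm n M p < sigmaPerm n M q ∧ sigmaPerm n M q ≤ p ∧ p < q)) ↔
    Shape n M (n - p.1) (n - q.1) := by
  have hp := p.2; have hq := q.2
  simp only [Fin.lt_def, Fin.le_def, sigmaPerm_apply]
  unfold sigmaFun Shape
  set u := n - p.1 with hu
  set w := n - q.1 with hw
  have hpv : p.1 = n - u := by omega
  have hqv : q.1 = n - w := by omega
  have hu1 : 1 ≤ u := by omega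
  have hu2 : u ≤ n := by omega
  have hw1 : 1 ≤ w := by omega
  have hw2 : w ≤ n := by omega
  have hpfu : prevF M u < u := prevF_lt M u (by omega)
  have hpfw : prevF M w < w := prevF_lt M w (by omega)
  rw [hpv, hqv]
  rcases Classical.em (u ∈ M ∨ u = n) with hcu | hcu <;>
    rcases Classical.em (w ∈ M ∨ w = n) with hcw | hcw
  · -- both chain: no crossings, shape false
    rw [if_pos hcu, if_pos hcw]
    constructor
    · rintro (⟨h1, h2, h3⟩ | ⟨h1, h2, h3⟩) <;>
      · exfalso
        have hwu : w < u := by omega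
        have hwM : w ∈ M := by rcases hcw with h' | h'; exact h'; omega
        have := le_prevF M hwM hwu
        omega
    · rintro ⟨_, hw3, _, _⟩; exact absurd hcw (by tauto)
  · -- p chain, q straight : the real case
    rw [if_pos hcu, if_neg hcw]
    push_neg at hcw
    constructor
    · rintro (⟨h1, h2, h3⟩ | ⟨h1, h2, h3⟩)
      · exact ⟨hcu, hcw.1, hcw.2, by omega, by omega, Or.inr (by omega)⟩
      · exact ⟨hcu, hcw.1, hcw.2, by omega, by omega, Or.inl (by omega)⟩
    · rintro ⟨_, _, _, h4, h5, h6 | h6⟩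
      · right; omega
      · left; omega
  · -- p straight, q chain
    rw [if_neg hcu, if_pos hcw]
    constructor
    · rintro (⟨h1, h2, h3⟩ | ⟨h1, h2, h3⟩) <;> omega
    · rintro ⟨hcu', _⟩; exact absurd hcu' hcu
  · -- both straight
    rw [if_neg hcu, if_neg hcw]
    constructor
    · rintro (⟨h1, h2, h3⟩ | ⟨h1, h2, h3⟩) <;> omega
    · rintro ⟨hcu', _⟩; exact absurd hcu' hcu

lemma crs_sigma (n : ℕ) (M : Finset ℕ) (hn : 2 ≤ n) (hM : M ⊆ Finset.Icc 2 (n-1)) :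
    crs (sigmaPerm n M) = fM n M := by
  classical
  have hMel : ∀ a ∈ M, 2 ≤ a ∧ a ≤ n - 1 := fun a ha => Finset.mem_Icc.mp (hM ha)
  unfold crs fM
  apply Finset.card_bij (fun pq _ => n - pq.2.1)
  · -- membership
    rintro ⟨p, q⟩ hpq
    rw [Finset.mem_filter] at hpq
    have hS := (P_shape n M p q).mp hpq.2
    obtain ⟨hcu, hwM, hwn, h4, h5, h6⟩ := hS
    set u := n - p.1 with hu
    set w := n - q.1 with hww
    have hq := q.2; have hp := p.2
    have hw1 : 1 ≤ w := by omega
    have hu2 : u ≤ n := by omega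
    rw [Finset.mem_filter, Finset.mem_Icc]
    refine ⟨⟨by omega, by omega⟩, hwM, ?_⟩
    rcases h6 with h6 | h6
    · -- lower : witness u
      have hun : u ≠ n := by omega
      have huM : u ∈ M := by tauto
      exact ⟨u, huM, Or.inl ⟨by omega, by omega⟩⟩
    · -- upper : witness prevF M u
      have hpm : prevF M u ∈ M := by
        rcases prevF_mem M u with h0 | hm
        · exfalso; omega
        · exact hm
      exact ⟨prevF M u, hpm, Or.inr ⟨by omega, by omega⟩⟩
  · -- injectivity
    rintro ⟨p, q⟩ hpq ⟨p', q'⟩ hpq' heq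
    rw [Finset.mem_filter] at hpq hpq'
    have hS := (P_shape n M p q).mp hpq.2
    have hS' := (P_shape n M p' q').mp hpq'.2
    obtain ⟨hcu, hwM, hwn, h4, h5, h6⟩ := hS
    obtain ⟨hcu', hwM', hwn', h4', h5', h6'⟩ := hS'
    have hq := q.2; have hq' := q'.2; have hp := p.2; have hp' := p'.2
    have heq' : n - (q : ℕ) = n - (q' : ℕ) := heq
    have hqq : q = q' := Fin.ext (by omega)
    subst hqq
    -- now show p = p'
    have hpp : p.1 = p'.1 := by
      set u := n - p.1 with hu
      set u' := n - p'.1 with hu'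
      set w := n - q.1 with hww
      have huu : u = u' := by
        by_contra hne
        rcases Nat.lt_or_ge u u' with hlt | hge
        · have huM : u ∈ M := by rcases hcu with h | h; exact h; omega
          have := le_prevF M huM (show u < u' from hlt)
          omega
        · have huM' : u' ∈ M := by rcases hcu' with h | h; exact h; omega
          have := le_prevF M huM' (show u' < u by omega)
          omega
      omega
    exact Prod.ext (Fin.ext hpp) rfl
  · -- surjectivity
    intro v hv
    rw [Finset.mem_filter, Finset.mem_Icc] at hv
    obtain ⟨⟨hv1, hv2⟩, hvM, a, haM, hcone⟩ := hv
    have hvn : v ≤ n - 1 := hv2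
    have han : 2 ≤ a ∧ a ≤ n - 1 := hMel a haM
    -- u := least chain element above v
    have hne : ((insert n M).filter (fun b => v < b)).Nonempty :=
      ⟨n, Finset.mem_filter.mpr ⟨Finset.mem_insert_self _ _, by omega⟩⟩
    set u := ((insert n M).filter (fun b => v < b)).min' hne with hudef
    have humem := Finset.min'_mem _ hne
    rw [Finset.mem_filter, Finset.mem_insert] at humem
    have hchain : u ∈ M ∨ u = n := by tauto
    have hvu : v < u := humem.2
    have humin : ∀ b ∈ insert n M, v < b → u ≤ b := by
      intro b hb hvb
      exact Finset.min'_le _ _ (Finset.mem_filter.mpr ⟨hb, hvb⟩)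
    have hun : u ≤ n := by
      rcases hchain with h | h
      · have := hMel u h; omega
      · omega
    have hpu : prevF M u < v := by
      have h1 : prevF M u < u := prevF_lt M u (by omega)
      rcases prevF_mem M u with h0 | hm
      · omega
      · rcases Nat.lt_or_ge (prevF M u) v with h | h
        · exact h
        · exfalso
          have hne2 : prevF M u ≠ v := fun hh => hvM (hh ▸ hm)
          have := humin (prevF M u) (Finset.mem_insert_of_mem hm) (by omega)
          omega
    -- build the pair
    refine ⟨(⟨n - u, by omega⟩, ⟨n - v, by omega⟩), ?_, ?_⟩
    · rw [Finset.mem_filter]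
      refine ⟨Finset.mem_univ _, ?_⟩
      rw [P_shape n M]
      have e1 : n - (n - u) = u := by omega
      have e2 : n - (n - v) = v := by omega
      rw [show ((⟨n-u, by omega⟩ : Fin n) : ℕ) = n - u from rfl] at *
      simp only [e1, e2]
      refine ⟨hchain, hvM, by omega, hpu, hvu, ?_⟩
      rcases hcone with ⟨ha1, ha2⟩ | ⟨ha1, ha2⟩
      · -- a ∈ (v, n-v], so u ≤ a ≤ n-v : lower
        left
        have := humin a (Finset.mem_insert_of_mem haM) ha1
        omega
      · -- a ∈ (n-v, v], a ≤ v < u so a ≤ prevF u : upper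
        right
        have := le_prevF M haM (show a < u by omega)
        omega
    · show n - (n - v) = v
      omega

lemma sigma_injM (n : ℕ) (hn : 2 ≤ n) {M1 M2 : Finset ℕ}
    (h1 : M1 ⊆ Finset.Icc 2 (n-1)) (h2 : M2 ⊆ Finset.Icc 2 (n-1))
    (h : sigmaPerm n M1 = sigmaPerm n M2) : M1 = M2 := by
  have key : ∀ (M : Finset ℕ), M ⊆ Finset.Icc 2 (n-1) → ∀ v, 2 ≤ v → v ≤ n - 1 →
      (v ∈ M ↔ sigmaFun n M (n - v) ≠ v) := by
    intro M hM v hv1 hv2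
    unfold sigmaFun
    have he : n - (n - v) = v := by omega
    rw [he]
    constructor
    · intro hvM
      rw [if_pos (Or.inl hvM)]
      have := prevF_lt M v (by omega)
      omega
    · intro hne
      by_contra hvM
      rw [if_neg (by push_neg; exact ⟨hvM, by omega⟩)] at hne
      exact hne rfl
  ext a
  rcases Classical.em (2 ≤ a ∧ a ≤ n - 1) with ⟨ha1, ha2⟩ | hha
  · rw [key M1 h1 a ha1 ha2, key M2 h2 a ha1 ha2]
    have : sigmaFun n M1 (n - a) = sigmaFun n M2 (n - a) := by
      have := congrArg (fun σ : Equiv.Perm (Fin n) => (σ ⟨n - a, by omega⟩ : ℕ)) h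
      simpa [sigmaPerm_apply] using this
    rw [this]
  · constructor <;> intro hmem
    · exact absurd (Finset.mem_Icc.mp (h1 hmem)) (by omega)
    · exact absurd (Finset.mem_Icc.mp (h2 hmem)) (by omega)

lemma fM_eq_sum (n : ℕ) (M : Finset ℕ) :
    fM n M = ∑ v ∈ Finset.Icc 1 (n-1),
      (if (v ∉ M ∧ ∃ a ∈ M, (v < a ∧ a ≤ n-v) ∨ (n-v < a ∧ a ≤ v)) then 1 else 0) := by
  unfold fM; rw [Finset.card_filter]

lemma fM_empty (n : ℕ) : fM n (∅ : Finset ℕ) = 0 := by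
  unfold fM
  rw [Finset.card_eq_zero, Finset.filter_eq_empty_iff]
  rintro v - ⟨-, a, ha, -⟩
  exact absurd ha (Finset.notMem_empty a)

lemma fM_bound (n : ℕ) (hn : 2 ≤ n) (M : Finset ℕ) (hM : M ⊆ Finset.Icc 2 (n-1)) :
    fM n M ≤ n - 2 := by
  rcases M.eq_empty_or_nonempty with rfl | hne
  · rw [fM_empty]; omega
  · have hsub : (((Finset.Icc 1 (n-1)).filter
        (fun v => v ∉ M ∧ ∃ a ∈ M, (v < a ∧ a ≤ n-v) ∨ (n-v < a ∧ a ≤ v)))) ⊆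
        (Finset.Icc 1 (n-1)) \ M := by
      intro v hv
      rw [Finset.mem_filter] at hv
      exact Finset.mem_sdiff.mpr ⟨hv.1, hv.2.1⟩
    have hM2 : M ⊆ Finset.Icc 1 (n-1) := fun a ha => by
      have := Finset.mem_Icc.mp (hM ha); rw [Finset.mem_Icc]; omega
    have h1 := Finset.card_le_card hsub
    rw [Finset.card_sdiff_of_subset hM2] at h1
    have h2 : 1 ≤ M.card := Finset.card_pos.mpr hne
    have h3 : (Finset.Icc 1 (n-1)).card = n - 1 := by rw [Nat.card_Icc]; omega
    unfold fM
    omega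

def liftM (n : ℕ) (x y : Bool) (M' : Finset ℕ) : Finset ℕ :=
  (M'.image (· + 1)) ∪ ((if x then {2} else ∅) ∪ (if y then {n-1} else ∅))

lemma mem_liftM (n : ℕ) (x y : Bool) (M' : Finset ℕ) (a : ℕ) :
    a ∈ liftM n x y M' ↔ ((∃ b ∈ M', a = b + 1) ∨ (x = true ∧ a = 2) ∨ (y = true ∧ a = n-1)) := by
  unfold liftM
  cases x <;> cases y <;>
    simp [Finset.mem_union, Finset.mem_image, eq_comm] <;> simp only [or_comm, or_left_comm, or_assoc]

lemma key_step (n : ℕ) (hn : 5 ≤ n) (x y : Bool) (M' : Finset ℕ)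
    (hM' : M' ⊆ Finset.Icc 2 (n-3)) (hne : M'.Nonempty) :
    fM n (liftM n x y M') = fM (n-2) M' + ((if x then 0 else 1) + (if y then 0 else 1)) := by
  have hr : ∀ b ∈ M', 2 ≤ b ∧ b ≤ n - 3 := fun b hb => Finset.mem_Icc.mp (hM' hb)
  obtain ⟨b0, hb0⟩ := hne
  have hb0r := hr b0 hb0
  set M := liftM n x y M' with hMdef
  have hmem := mem_liftM n x y M'
  -- split the big interval
  have hsplit : Finset.Icc 1 (n-1) = (Finset.Icc 3 (n-3)) ∪ {1, 2, n-2, n-1} := by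
    ext a
    simp only [Finset.mem_Icc, Finset.mem_union, Finset.mem_insert, Finset.mem_singleton]
    omega
  have hsplit' : Finset.Icc 1 (n-3) = (Finset.Icc 2 (n-4)) ∪ {1, n-3} := by
    ext a
    simp only [Finset.mem_Icc, Finset.mem_union, Finset.mem_insert, Finset.mem_singleton]
    omega
  rw [fM_eq_sum, fM_eq_sum, show n - 2 - 1 = n - 3 by omega, hsplit, hsplit']
  rw [Finset.sum_union (by
    rw [Finset.disjoint_left]
    intro a ha hb
    simp only [Finset.mem_Icc] at ha
    simp only [Finset.mem_insert, Finset.mem_singleton] at hb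
    omega)]
  rw [Finset.sum_union (by
    rw [Finset.disjoint_left]
    intro a ha hb
    simp only [Finset.mem_Icc] at ha
    simp only [Finset.mem_insert, Finset.mem_singleton] at hb
    omega)]
  -- inner sums are equal
  have hinner : ∑ v ∈ Finset.Icc 3 (n-3),
      (if (v ∉ M ∧ ∃ a ∈ M, (v < a ∧ a ≤ n-v) ∨ (n-v < a ∧ a ≤ v)) then 1 else 0) =
      ∑ v' ∈ Finset.Icc 2 (n-4),
      (if (v' ∉ M' ∧ ∃ a ∈ M', (v' < a ∧ a ≤ n-2-v') ∨ (n-2-v' < a ∧ a ≤ v')) then (1:ℕ) else 0) := by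
    rw [show Finset.Icc 3 (n-3) = (Finset.Icc 2 (n-4)).image (· + 1) by
      ext a
      simp only [Finset.mem_Icc, Finset.mem_image]
      constructor
      · intro ha; exact ⟨a - 1, by omega, by omega⟩
      · rintro ⟨b, hb, rfl⟩; omega]
    rw [Finset.sum_image (by intro a _ b _ h; simp only at h; omega)]
    apply Finset.sum_congr rfl
    intro v' hv'
    rw [Finset.mem_Icc] at hv'
    congr 1
    apply propext
    constructor
    · rintro ⟨hnm, a, haM, hd⟩
      have haM' := (hmem a).mp haM
      constructor
      · intro hvm
        exact hnm ((hmem (v'+1)).mpr (Or.inl ⟨v', hvm, rfl⟩))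
      · rcases haM' with ⟨b, hbM, rfl⟩ | ⟨hx, rfl⟩ | ⟨hy, rfl⟩
        · refine ⟨b, hbM, ?_⟩
          rcases hd with ⟨h1, h2⟩ | ⟨h1, h2⟩
          · exact Or.inl ⟨by omega, by omega⟩
          · exact Or.inr ⟨by omega, by omega⟩
        · rcases hd with ⟨h1, h2⟩ | ⟨h1, h2⟩ <;> omega
        · rcases hd with ⟨h1, h2⟩ | ⟨h1, h2⟩ <;> omega
    · rintro ⟨hnm, a, haM, hd⟩
      have har := hr a haM
      constructor
      · intro hvm
        rcases (hmem (v'+1)).mp hvm with ⟨b, hbM, hb⟩ | ⟨hx, hb⟩ | ⟨hy, hb⟩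
        · have : b = v' := by omega
          exact hnm (this ▸ hbM)
        · omega
        · omega
      · refine ⟨a + 1, (hmem (a+1)).mpr (Or.inl ⟨a, haM, rfl⟩), ?_⟩
        rcases hd with ⟨h1, h2⟩ | ⟨h1, h2⟩
        · exact Or.inl ⟨by omega, by omega⟩
        · exact Or.inr ⟨by omega, by omega⟩
  rw [hinner]
  -- now the boundary sums
  have hb4 : ({1, 2, n-2, n-1} : Finset ℕ) = insert 1 (insert 2 (insert (n-2) {n-1})) := rfl
  have hb2 : ({1, n-3} : Finset ℕ) = insert 1 {n-3} := rfl
  rw [hb4, hb2]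
  rw [Finset.sum_insert (by simp; omega), Finset.sum_insert (by simp; omega),
      Finset.sum_insert (by simp; omega), Finset.sum_singleton,
      Finset.sum_insert (by simp; omega), Finset.sum_singleton]
  -- evaluate each indicator
  have e1 : (if ((1:ℕ) ∉ M ∧ ∃ a ∈ M, (1 < a ∧ a ≤ n-1) ∨ (n-1 < a ∧ a ≤ 1)) then (1:ℕ) else 0) = 1 := by
    rw [if_pos]
    refine ⟨?_, b0 + 1, (hmem _).mpr (Or.inl ⟨b0, hb0, rfl⟩), Or.inl ⟨by omega, by omega⟩⟩
    intro hm
    rcases (hmem 1).mp hm with ⟨b, hbM, hb⟩ | ⟨hx, hb⟩ | ⟨hy, hb⟩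
    · have := hr b hbM; omega
    · omega
    · omega
  have e2 : (if ((2:ℕ) ∉ M ∧ ∃ a ∈ M, (2 < a ∧ a ≤ n-2) ∨ (n-2 < a ∧ a ≤ 2)) then (1:ℕ) else 0)
      = (if x then 0 else 1) := by
    cases x
    · simp only [Bool.false_eq_true, if_false]
      rw [if_pos]
      constructor
      · intro hm
        rcases (hmem 2).mp hm with ⟨b, hbM, hb⟩ | ⟨hx, hb⟩ | ⟨hy, hb⟩
        · have := hr b hbM; omega
        · simp at hx
        · omega
      · exact ⟨b0 + 1, (hmem _).mpr (Or.inl ⟨b0, hb0, rfl⟩), Or.inl ⟨by omega, by omega⟩⟩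
    · simp only [if_true]
      rw [if_neg]
      rintro ⟨h2m, -⟩
      exact h2m ((hmem 2).mpr (Or.inr (Or.inl ⟨rfl, rfl⟩)))
  have e3 : (if ((n-2:ℕ) ∉ M ∧ ∃ a ∈ M, (n-2 < a ∧ a ≤ n-(n-2)) ∨ (n-(n-2) < a ∧ a ≤ n-2)) then (1:ℕ) else 0)
      = (if (n-3) ∈ M' then 0 else 1) := by
    by_cases hc : (n-3) ∈ M'
    · rw [if_pos hc, if_neg]
      rintro ⟨hnm, -⟩
      exact hnm ((hmem (n-2)).mpr (Or.inl ⟨n-3, hc, by omega⟩))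
    · rw [if_neg hc, if_pos]
      constructor
      · intro hm
        rcases (hmem (n-2)).mp hm with ⟨b, hbM, hb⟩ | ⟨hx, hb⟩ | ⟨hy, hb⟩
        · have hbr := hr b hbM
          have : b = n - 3 := by omega
          exact hc (this ▸ hbM)
        · omega
        · omega
      · exact ⟨b0 + 1, (hmem _).mpr (Or.inl ⟨b0, hb0, rfl⟩), Or.inr ⟨by omega, by omega⟩⟩
  have e4 : (if ((n-1:ℕ) ∉ M ∧ ∃ a ∈ M, (n-1 < a ∧ a ≤ n-(n-1)) ∨ (n-(n-1) < a ∧ a ≤ n-1)) then (1:ℕ) else 0)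
      = (if y then 0 else 1) := by
    cases y
    · simp only [Bool.false_eq_true, if_false]
      rw [if_pos]
      constructor
      · intro hm
        rcases (hmem (n-1)).mp hm with ⟨b, hbM, hb⟩ | ⟨hx, hb⟩ | ⟨hy, hb⟩
        · have := hr b hbM; omega
        · omega
        · simp at hy
      · exact ⟨b0 + 1, (hmem _).mpr (Or.inl ⟨b0, hb0, rfl⟩), Or.inr ⟨by omega, by omega⟩⟩
    · simp only [if_true]
      rw [if_neg]
      rintro ⟨hnm, -⟩
      exact hnm ((hmem (n-1)).mpr (Or.inr (Or.inr ⟨rfl, rfl⟩)))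
  have e1' : (if ((1:ℕ) ∉ M' ∧ ∃ a ∈ M', (1 < a ∧ a ≤ n-2-1) ∨ (n-2-1 < a ∧ a ≤ 1)) then (1:ℕ) else 0) = 1 := by
    rw [if_pos]
    refine ⟨fun h => by have := hr 1 h; omega, b0, hb0, Or.inl ⟨by omega, by omega⟩⟩
  have e3' : (if ((n-3:ℕ) ∉ M' ∧ ∃ a ∈ M', (n-3 < a ∧ a ≤ n-2-(n-3)) ∨ (n-2-(n-3) < a ∧ a ≤ n-3)) then (1:ℕ) else 0)
      = (if (n-3) ∈ M' then 0 else 1) := by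
    by_cases hc : (n-3) ∈ M'
    · rw [if_pos hc, if_neg]; rintro ⟨hnm, -⟩; exact hnm hc
    · rw [if_neg hc, if_pos]
      refine ⟨hc, b0, hb0, Or.inr ⟨by omega, ?_⟩⟩
      have hb0ne : b0 ≠ n - 3 := fun hh => hc (hh ▸ hb0)
      omega
  rw [e1, e2, e3, e4, e1', e3']
  cases x <;> cases y <;> by_cases hc : (n-3) ∈ M' <;> simp [hc] <;> omega

lemma key_empty (n : ℕ) (hn : 5 ≤ n) (x y : Bool) :
    fM n (liftM n x y ∅) = if x then (if y then 1 else 2) else (if y then 1 else 0) := by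
  set M := liftM n x y ∅ with hMdef
  have hmem : ∀ a, a ∈ M ↔ ((x = true ∧ a = 2) ∨ (y = true ∧ a = n-1)) := by
    intro a
    rw [hMdef, mem_liftM]
    simp
  have hsplit : Finset.Icc 1 (n-1) = (Finset.Icc 3 (n-3)) ∪ {1, 2, n-2, n-1} := by
    ext a
    simp only [Finset.mem_Icc, Finset.mem_union, Finset.mem_insert, Finset.mem_singleton]
    omega
  rw [fM_eq_sum, hsplit]
  rw [Finset.sum_union (by
    rw [Finset.disjoint_left]
    intro a ha hb
    simp only [Finset.mem_Icc] at ha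
    simp only [Finset.mem_insert, Finset.mem_singleton] at hb
    omega)]
  have hinner : ∑ v ∈ Finset.Icc 3 (n-3),
      (if (v ∉ M ∧ ∃ a ∈ M, (v < a ∧ a ≤ n-v) ∨ (n-v < a ∧ a ≤ v)) then (1:ℕ) else 0) = 0 := by
    apply Finset.sum_eq_zero
    intro v hv
    rw [Finset.mem_Icc] at hv
    rw [if_neg]
    rintro ⟨hnm, a, haM, hd⟩
    rcases (hmem a).mp haM with ⟨hx, rfl⟩ | ⟨hy, rfl⟩ <;>
      rcases hd with ⟨h1, h2⟩ | ⟨h1, h2⟩ <;> omega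
  rw [hinner]
  rw [show ({1, 2, n-2, n-1} : Finset ℕ) = insert 1 (insert 2 (insert (n-2) {n-1})) from rfl]
  rw [Finset.sum_insert (by simp; omega), Finset.sum_insert (by simp; omega),
      Finset.sum_insert (by simp; omega), Finset.sum_singleton]
  have e1 : (if ((1:ℕ) ∉ M ∧ ∃ a ∈ M, (1 < a ∧ a ≤ n-1) ∨ (n-1 < a ∧ a ≤ 1)) then (1:ℕ) else 0)
      = (if x = true ∨ y = true then 1 else 0) := by
    by_cases hc : x = true ∨ y = true
    · rw [if_pos hc, if_pos]
      refine ⟨?_, ?_⟩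
      · intro hm
        rcases (hmem 1).mp hm with ⟨hx, hb⟩ | ⟨hy, hb⟩ <;> omega
      · rcases hc with hc | hc
        · exact ⟨2, (hmem 2).mpr (Or.inl ⟨hc, rfl⟩), Or.inl ⟨by omega, by omega⟩⟩
        · exact ⟨n-1, (hmem (n-1)).mpr (Or.inr ⟨hc, rfl⟩), Or.inl ⟨by omega, by omega⟩⟩
    · rw [if_neg hc, if_neg]
      push_neg at hc
      rintro ⟨-, a, haM, -⟩
      rcases (hmem a).mp haM with ⟨hx, -⟩ | ⟨hy, -⟩
      · exact absurd hx hc.1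
      · exact absurd hy hc.2
  have e2 : (if ((2:ℕ) ∉ M ∧ ∃ a ∈ M, (2 < a ∧ a ≤ n-2) ∨ (n-2 < a ∧ a ≤ 2)) then (1:ℕ) else 0) = 0 := by
    rw [if_neg]
    rintro ⟨hnm, a, haM, hd⟩
    rcases (hmem a).mp haM with ⟨hx, rfl⟩ | ⟨hy, rfl⟩
    · exact hnm ((hmem 2).mpr (Or.inl ⟨hx, rfl⟩))
    · rcases hd with ⟨h1, h2⟩ | ⟨h1, h2⟩ <;> omega
  have e3 : (if ((n-2:ℕ) ∉ M ∧ ∃ a ∈ M, (n-2 < a ∧ a ≤ n-(n-2)) ∨ (n-(n-2) < a ∧ a ≤ n-2)) then (1:ℕ) else 0) = 0 := by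
    rw [if_neg]
    rintro ⟨hnm, a, haM, hd⟩
    rcases (hmem a).mp haM with ⟨hx, rfl⟩ | ⟨hy, rfl⟩ <;>
      rcases hd with ⟨h1, h2⟩ | ⟨h1, h2⟩ <;> omega
  have e4 : (if ((n-1:ℕ) ∉ M ∧ ∃ a ∈ M, (n-1 < a ∧ a ≤ n-(n-1)) ∨ (n-(n-1) < a ∧ a ≤ n-1)) then (1:ℕ) else 0)
      = (if ¬ (y = true) ∧ x = true then 1 else 0) := by
    by_cases hc : ¬ (y = true) ∧ x = true
    · rw [if_pos hc, if_pos]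
      refine ⟨?_, 2, (hmem 2).mpr (Or.inl ⟨hc.2, rfl⟩), Or.inr ⟨by omega, by omega⟩⟩
      intro hm
      rcases (hmem (n-1)).mp hm with ⟨hx, hb⟩ | ⟨hy, hb⟩
      · omega
      · exact hc.1 hy
    · rw [if_neg hc, if_neg]
      push_neg at hc
      rintro ⟨hnm, a, haM, hd⟩
      rcases (hmem a).mp haM with ⟨hx, rfl⟩ | ⟨hy, rfl⟩
      · have hy : y = true := by
          by_contra hyn
          exact absurd hx (hc hyn)
        exact hnm ((hmem (n-1)).mpr (Or.inr ⟨hy, rfl⟩))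
      · exact hnm haM
  rw [e1, e2, e3, e4]
  cases x <;> cases y <;> simp

lemma lift_subset (n : ℕ) (hn : 5 ≤ n) (x y : Bool) (M' : Finset ℕ)
    (hM' : M' ⊆ Finset.Icc 2 (n-3)) : liftM n x y M' ⊆ Finset.Icc 2 (n-1) := by
  intro a ha
  rw [mem_liftM] at ha
  rw [Finset.mem_Icc]
  rcases ha with ⟨b, hb, rfl⟩ | ⟨-, rfl⟩ | ⟨-, rfl⟩
  · have := Finset.mem_Icc.mp (hM' hb); omega
  · omega
  · omega

lemma retract_lift (n : ℕ) (hn : 5 ≤ n) (x y : Bool) (M' : Finset ℕ)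
    (hM' : M' ⊆ Finset.Icc 2 (n-3)) :
    ((liftM n x y M') ∩ Finset.Icc 3 (n-2)).image (· - 1) = M' := by
  ext b
  rw [Finset.mem_image]
  constructor
  · rintro ⟨a, ha, rfl⟩
    rw [Finset.mem_inter, mem_liftM, Finset.mem_Icc] at ha
    obtain ⟨hmem, ha3, ha4⟩ := ha
    rcases hmem with ⟨c, hc, rfl⟩ | ⟨-, rfl⟩ | ⟨-, rfl⟩
    · simpa using hc
    · omega
    · omega
  · intro hb
    have hbr := Finset.mem_Icc.mp (hM' hb)
    refine ⟨b + 1, ?_, by omega⟩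
    rw [Finset.mem_inter, mem_liftM, Finset.mem_Icc]
    exact ⟨Or.inl ⟨b, hb, rfl⟩, by omega, by omega⟩

lemma lift_retract (n : ℕ) (hn : 5 ≤ n) (x y : Bool) (M : Finset ℕ)
    (hM : M ⊆ Finset.Icc 2 (n-1)) (hx : 2 ∈ M ↔ x = true) (hy : (n-1) ∈ M ↔ y = true) :
    liftM n x y ((M ∩ Finset.Icc 3 (n-2)).image (· - 1)) = M := by
  ext a
  rw [mem_liftM]
  constructor
  · rintro (⟨b, hb, rfl⟩ | ⟨hxx, rfl⟩ | ⟨hyy, rfl⟩)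
    · rw [Finset.mem_image] at hb
      obtain ⟨c, hc, rfl⟩ := hb
      rw [Finset.mem_inter, Finset.mem_Icc] at hc
      have : c - 1 + 1 = c := by omega
      rw [this]
      exact hc.1
    · exact hx.mpr hxx
    · exact hy.mpr hyy
  · intro ha
    have har := Finset.mem_Icc.mp (hM ha)
    rcases Nat.lt_trichotomy a 3 with h3 | h3 | h3
    · -- a = 2
      have : a = 2 := by omega
      subst this
      exact Or.inr (Or.inl ⟨hx.mp ha, rfl⟩)
    · -- a = 3 : in middle (n ≥ 5 so 3 ≤ n-2)
      refine Or.inl ⟨a - 1, ?_, by omega⟩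
      rw [Finset.mem_image]
      exact ⟨a, Finset.mem_inter.mpr ⟨ha, Finset.mem_Icc.mpr ⟨by omega, by omega⟩⟩, rfl⟩
    · rcases Nat.lt_or_ge a (n-1) with h4 | h4
      · refine Or.inl ⟨a - 1, ?_, by omega⟩
        rw [Finset.mem_image]
        exact ⟨a, Finset.mem_inter.mpr ⟨ha, Finset.mem_Icc.mpr ⟨by omega, by omega⟩⟩, rfl⟩
      · have : a = n - 1 := by omega
        subst this
        exact Or.inr (Or.inr ⟨hy.mp ha, rfl⟩)

lemma cell_card (n : ℕ) (hn : 5 ≤ n) (x y : Bool) (k : ℕ) :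
    (((Finset.Icc 2 (n-1)).powerset).filter
      (fun M => (2 ∈ M ↔ x = true) ∧ ((n-1) ∈ M ↔ y = true) ∧ fM n M = k)).card =
    (((Finset.Icc 2 (n-3)).powerset).filter
      (fun M' => fM n (liftM n x y M') = k)).card := by
  refine Finset.card_bij' (fun M _ => (M ∩ Finset.Icc 3 (n-2)).image (· - 1))
    (fun M' _ => liftM n x y M') ?hi ?hj ?left ?right
  case hi =>
    intro M hM
    rw [Finset.mem_filter, Finset.mem_powerset] at hM
    obtain ⟨hsub, hx, hy, hfk⟩ := hM
    rw [Finset.mem_filter, Finset.mem_powerset]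
    constructor
    · intro b hb
      rw [Finset.mem_image] at hb
      obtain ⟨c, hc, rfl⟩ := hb
      rw [Finset.mem_inter, Finset.mem_Icc] at hc
      rw [Finset.mem_Icc]
      omega
    · rw [lift_retract n hn x y M hsub hx hy]
      exact hfk
  case hj =>
    intro M' hM'
    rw [Finset.mem_filter, Finset.mem_powerset] at hM'
    obtain ⟨hsub, hfk⟩ := hM'
    rw [Finset.mem_filter, Finset.mem_powerset]
    refine ⟨lift_subset n hn x y M' hsub, ?_, ?_, hfk⟩
    · rw [mem_liftM]
      constructor
      · rintro (⟨b, hb, hb2⟩ | ⟨h, -⟩ | ⟨-, h⟩)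
        · have := Finset.mem_Icc.mp (hsub hb); omega
        · exact h
        · omega
      · intro h; exact Or.inr (Or.inl ⟨h, rfl⟩)
    · rw [mem_liftM]
      constructor
      · rintro (⟨b, hb, hb2⟩ | ⟨-, h⟩ | ⟨h, -⟩)
        · have := Finset.mem_Icc.mp (hsub hb); omega
        · omega
        · exact h
      · intro h; exact Or.inr (Or.inr ⟨h, rfl⟩)
  case left =>
    intro M hM
    rw [Finset.mem_filter, Finset.mem_powerset] at hM
    exact lift_retract n hn x y M hM.1 hM.2.1 hM.2.2.1
  case right =>
    intro M' hM'
    rw [Finset.mem_filter, Finset.mem_powerset] at hM'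
    exact retract_lift n hn x y M' hM'.1

lemma filter_empty_card (n : ℕ) (Q : Finset ℕ → Prop) [DecidablePred Q] :
    (((Finset.Icc 2 n).powerset).filter (fun M' => Q M' ∧ M' = ∅)).card
      = if Q ∅ then 1 else 0 := by
  have : ((Finset.Icc 2 n).powerset).filter (fun M' => Q M' ∧ M' = ∅)
      = if Q ∅ then {∅} else ∅ := by
    ext A
    rw [Finset.mem_filter, Finset.mem_powerset]
    split
    · next h =>
      simp only [Finset.mem_singleton]
      constructor
      · rintro ⟨-, -, rfl⟩; rfl
      · rintro rfl; exact ⟨Finset.empty_subset _, h, rfl⟩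
    · next h =>
      simp only [Finset.notMem_empty, iff_false]
      rintro ⟨-, hQ, rfl⟩; exact h hQ
  rw [this]
  split <;> simp

lemma cell_count (n : ℕ) (hn : 5 ≤ n) (x y : Bool) (k : ℕ) :
    (((Finset.Icc 2 (n-3)).powerset).filter (fun M' => fM n (liftM n x y M') = k)).card
    = (((Finset.Icc 2 (n-3)).powerset).filter
        (fun M' => M'.Nonempty ∧ fM (n-2) M' + ((if x then 0 else 1) + (if y then 0 else 1)) = k)).card
      + (if (if x then (if y then 1 else 2) else (if y then 1 else 0)) = k then 1 else 0) := by
  classical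
  have hsplit := Finset.card_filter_add_card_filter_not
    (s := ((Finset.Icc 2 (n-3)).powerset).filter (fun M' => fM n (liftM n x y M') = k))
    (p := fun M' => M'.Nonempty)
  rw [Finset.filter_filter, Finset.filter_filter] at hsplit
  have h1 : ((Finset.Icc 2 (n-3)).powerset).filter
      (fun M' => fM n (liftM n x y M') = k ∧ M'.Nonempty)
      = ((Finset.Icc 2 (n-3)).powerset).filter
      (fun M' => M'.Nonempty ∧ fM (n-2) M' + ((if x then 0 else 1) + (if y then 0 else 1)) = k) := by
    apply Finset.filter_congr
    intro M' hM'
    rw [Finset.mem_powerset] at hM'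
    constructor
    · rintro ⟨hfk, hne⟩
      rw [key_step n hn x y M' hM' hne] at hfk
      exact ⟨hne, hfk⟩
    · rintro ⟨hne, hfk⟩
      rw [key_step n hn x y M' hM' hne]
      exact ⟨hfk, hne⟩
  have h2 : ((Finset.Icc 2 (n-3)).powerset).filter
      (fun M' => fM n (liftM n x y M') = k ∧ ¬ M'.Nonempty)
      = ((Finset.Icc 2 (n-3)).powerset).filter
      (fun M' => fM n (liftM n x y M') = k ∧ M' = ∅) := by
    apply Finset.filter_congr
    intro M' _
    rw [Finset.not_nonempty_iff_eq_empty]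
  rw [h1, h2] at hsplit
  have h3 := filter_empty_card (n-3) (fun M' => fM n (liftM n x y M') = k)
  rw [h3] at hsplit
  rw [key_empty n hn x y] at hsplit
  omega

lemma nonempty_count (n : ℕ) (hn : 2 ≤ n) (j : ℕ)
    (hIH : (((Finset.Icc 2 (n-1)).powerset).filter (fun M' => fM n M' = j)).card
            = Nat.choose (n-2) j) :
    (((Finset.Icc 2 (n-1)).powerset).filter (fun M' => M'.Nonempty ∧ fM n M' = j)).card
      = Nat.choose (n-2) j - (if j = 0 then 1 else 0) := by
  classical
  have hsplit := Finset.card_filter_add_card_filter_not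
    (s := ((Finset.Icc 2 (n-1)).powerset).filter (fun M' => fM n M' = j))
    (p := fun M' => M'.Nonempty)
  rw [Finset.filter_filter, Finset.filter_filter] at hsplit
  have h1 : ((Finset.Icc 2 (n-1)).powerset).filter (fun M' => fM n M' = j ∧ M'.Nonempty)
      = ((Finset.Icc 2 (n-1)).powerset).filter (fun M' => M'.Nonempty ∧ fM n M' = j) := by
    apply Finset.filter_congr
    intro M' _
    tauto
  have h2 : ((Finset.Icc 2 (n-1)).powerset).filter (fun M' => fM n M' = j ∧ ¬ M'.Nonempty)
      = ((Finset.Icc 2 (n-1)).powerset).filter (fun M' => fM n M' = j ∧ M' = ∅) := by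
    apply Finset.filter_congr
    intro M' _
    rw [Finset.not_nonempty_iff_eq_empty]
  rw [h1, h2, filter_empty_card (n-1) (fun M' => fM n M' = j), hIH] at hsplit
  rw [fM_empty] at hsplit
  by_cases hj : j = 0
  · subst hj
    simp only [if_pos rfl] at hsplit ⊢
    have : Nat.choose (n-2) 0 = 1 := Nat.choose_zero_right _
    omega
  · have hz : (if 0 = j then (1:ℕ) else 0) = 0 := by
      rw [if_neg (by omega)]
    rw [hz] at hsplit
    rw [if_neg hj]
    omega

lemma countS : ∀ n : ℕ, 2 ≤ n → ∀ k : ℕ,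
    (((Finset.Icc 2 (n-1)).powerset).filter (fun M => fM n M = k)).card
      = Nat.choose (n-2) k := by
  intro n
  induction n using Nat.strong_induction_on with
  | _ n IH =>
    intro hn k
    rcases Nat.lt_or_ge (n-2) k with hk | hk
    · rw [Nat.choose_eq_zero_of_lt hk, Finset.card_eq_zero, Finset.filter_eq_empty_iff]
      intro M hM
      rw [Finset.mem_powerset] at hM
      have := fM_bound n hn M hM
      omega
    · rcases Nat.lt_or_ge n 5 with hsmall | hbig
      · interval_cases n <;> interval_cases k <;> decide
      · -- partition into four cells
        have hstep : ∀ x y : Bool,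
            (((Finset.Icc 2 (n-1)).powerset).filter
              (fun M => (2 ∈ M ↔ x = true) ∧ ((n-1) ∈ M ↔ y = true) ∧ fM n M = k)).card
            = (((Finset.Icc 2 (n-3)).powerset).filter
                (fun M' => M'.Nonempty ∧ fM (n-2) M'
                  + ((if x then 0 else 1) + (if y then 0 else 1)) = k)).card
              + (if (if x then (if y then 1 else 2) else (if y then 1 else 0)) = k then 1 else 0) := by
          intro x y
          rw [cell_card n hbig x y k, cell_count n hbig x y k]
        -- count nonempty sets with fM + e = k
        have hne2 : n - 2 - 1 = n - 3 := by omega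
        have hNE : ∀ e : ℕ,
            (((Finset.Icc 2 (n-3)).powerset).filter
              (fun M' => M'.Nonempty ∧ fM (n-2) M' + e = k)).card
            = if e ≤ k then Nat.choose (n-4) (k-e) - (if k = e then 1 else 0) else 0 := by
          intro e
          rcases Nat.lt_or_ge k e with hke | hke
          · rw [if_neg (by omega)]
            rw [Finset.card_eq_zero, Finset.filter_eq_empty_iff]
            rintro M' - ⟨-, hsum⟩
            omega
          · rw [if_pos hke]
            have hcongr : ((Finset.Icc 2 (n-3)).powerset).filter
                (fun M' => M'.Nonempty ∧ fM (n-2) M' + e = k)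
                = ((Finset.Icc 2 (n-3)).powerset).filter
                (fun M' => M'.Nonempty ∧ fM (n-2) M' = k - e) := by
              apply Finset.filter_congr
              intro M' _
              constructor
              · rintro ⟨h1, h2⟩; exact ⟨h1, by omega⟩
              · rintro ⟨h1, h2⟩; exact ⟨h1, by omega⟩
            rw [hcongr]
            have hIH' := IH (n-2) (by omega) (by omega) (k - e)
            rw [hne2] at hIH'
            have := nonempty_count (n-2) (by omega) (k-e) (by rw [hne2]; exact hIH')
            rw [hne2] at this
            rw [this]
            have hnn : n - 2 - 2 = n - 4 := by omega
            rw [hnn]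
            congr 1
            by_cases hke0 : k = e
            · rw [if_pos hke0, if_pos (by omega)]
            · rw [if_neg hke0, if_neg (by omega)]
        -- partition into the four cells
        set A := ((Finset.Icc 2 (n-1)).powerset).filter (fun M => fM n M = k) with hA
        have h2 := Finset.card_filter_add_card_filter_not
          (s := A) (p := fun M => 2 ∈ M)
        have h3 := Finset.card_filter_add_card_filter_not
          (s := A.filter (fun M => 2 ∈ M)) (p := fun M => (n-1) ∈ M)
        have h4 := Finset.card_filter_add_card_filter_not
          (s := A.filter (fun M => ¬ 2 ∈ M)) (p := fun M => (n-1) ∈ M)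
        have eTT : (A.filter (fun M => 2 ∈ M)).filter (fun M => (n-1) ∈ M)
            = ((Finset.Icc 2 (n-1)).powerset).filter
              (fun M => (2 ∈ M ↔ true = true) ∧ ((n-1) ∈ M ↔ true = true) ∧ fM n M = k) := by
          rw [hA, Finset.filter_filter, Finset.filter_filter]
          apply Finset.filter_congr
          intro M _
          simp only [eq_self_iff_true, iff_true, Bool.false_eq_true, iff_false]
          tauto
        have eTF : (A.filter (fun M => 2 ∈ M)).filter (fun M => ¬ (n-1) ∈ M)
            = ((Finset.Icc 2 (n-1)).powerset).filter
              (fun M => (2 ∈ M ↔ true = true) ∧ ((n-1) ∈ M ↔ false = true) ∧ fM n M = k) := by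
          rw [hA, Finset.filter_filter, Finset.filter_filter]
          apply Finset.filter_congr
          intro M _
          simp only [eq_self_iff_true, iff_true, Bool.false_eq_true, iff_false]
          tauto
        have eFT : (A.filter (fun M => ¬ 2 ∈ M)).filter (fun M => (n-1) ∈ M)
            = ((Finset.Icc 2 (n-1)).powerset).filter
              (fun M => (2 ∈ M ↔ false = true) ∧ ((n-1) ∈ M ↔ true = true) ∧ fM n M = k) := by
          rw [hA, Finset.filter_filter, Finset.filter_filter]
          apply Finset.filter_congr
          intro M _
          simp only [eq_self_iff_true, iff_true, Bool.false_eq_true, iff_false]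
          tauto
        have eFF : (A.filter (fun M => ¬ 2 ∈ M)).filter (fun M => ¬ (n-1) ∈ M)
            = ((Finset.Icc 2 (n-1)).powerset).filter
              (fun M => (2 ∈ M ↔ false = true) ∧ ((n-1) ∈ M ↔ false = true) ∧ fM n M = k) := by
          rw [hA, Finset.filter_filter, Finset.filter_filter]
          apply Finset.filter_congr
          intro M _
          simp only [eq_self_iff_true, iff_true, Bool.false_eq_true, iff_false]
          tauto
        rw [eTT, eTF] at h3
        rw [eFT, eFF] at h4
        rw [hstep true true, hNE] at h3
        rw [hstep true false, hNE] at h3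
        rw [hstep false true, hNE] at h4
        rw [hstep false false, hNE] at h4
        norm_num at h3 h4
        -- now case on k
        have hch0 : Nat.choose (n-4) 0 = 1 := Nat.choose_zero_right _
        by_cases hk0 : k = 0
        · subst hk0
          have hc : Nat.choose (n-2) 0 = 1 := Nat.choose_zero_right _
          norm_num at h3 h4
          omega
        · by_cases hk1 : k = 1
          · subst hk1
            have hc1 : Nat.choose (n-2) 1 = n - 2 := Nat.choose_one_right _
            have hc1' : Nat.choose (n-4) 1 = n - 4 := Nat.choose_one_right _
            norm_num at h3 h4
            omega
          · obtain ⟨j, rfl⟩ : ∃ j, k = j + 2 := ⟨k - 2, by omega⟩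
            have hp1 : Nat.choose (n-4+2) (j+2)
                = Nat.choose (n-4+1) (j+1) + Nat.choose (n-4+1) (j+2) :=
              Nat.choose_succ_succ _ _
            have hp2 : Nat.choose (n-4+1) (j+1)
                = Nat.choose (n-4) j + Nat.choose (n-4) (j+1) :=
              Nat.choose_succ_succ _ _
            have hp3 : Nat.choose (n-4+1) (j+2)
                = Nat.choose (n-4) (j+1) + Nat.choose (n-4) (j+2) :=
              Nat.choose_succ_succ _ _
            have hrw : n - 2 = n - 4 + 2 := by omega
            rw [hrw, hp1, hp2, hp3]
            have c1 : (1:ℕ) ≤ j + 2 := by omega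
            have c2 : (2:ℕ) ≤ j + 2 := by omega
            have c3 : j + 2 ≠ 1 := by omega
            have e1 : j + 2 - 1 = j + 1 := by omega
            have e2 : j + 2 - 2 = j := by omega
            simp only [if_pos c1, if_pos c2, if_neg c3, e1, e2] at h3 h4
            by_cases hj0 : j = 0
            · subst hj0
              norm_num at h3 h4 ⊢
              omega
            · have c4 : j + 2 ≠ 2 := by omega
              have c5 : ¬ ((2:ℕ) = j + 2) := by omega
              have c6 : ¬ ((0:ℕ) = j + 2) := by omega
              have c7 : ¬ ((1:ℕ) = j + 2) := by omega
              have c8 : ¬ (j + 2 = 0) := by omega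
              simp only [if_neg c4, if_neg c5, if_neg c6, if_neg c7, if_neg c8] at h3 h4
              omega

/-- at most one smaller value occurs before v, for permutations avoiding 123 and 213 -/
lemma uniq_vals {n : ℕ} {σ : Equiv.Perm (Fin n)}
    (hA : Avoids σ p123) (hB : Avoids σ p213) {v u1 u2 : Fin n}
    (h1 : u1 < v) (h2 : u2 < v) (hne : u1 ≠ u2)
    (hb1 : σ.symm u1 < σ.symm v) (hb2 : σ.symm u2 < σ.symm v) : False := by
  have hinj : σ.symm u1 ≠ σ.symm u2 := fun h => hne (σ.symm.injective h)
  rcases lt_or_gt_of_ne hinj with hlt | hlt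
  · exact uniq_of_avoids hA hB hlt hb2
      (by rw [Equiv.apply_symm_apply, Equiv.apply_symm_apply]; exact h1)
      (by rw [Equiv.apply_symm_apply, Equiv.apply_symm_apply]; exact h2)
  · exact uniq_of_avoids hA hB hlt hb1
      (by rw [Equiv.apply_symm_apply, Equiv.apply_symm_apply]; exact h2)
      (by rw [Equiv.apply_symm_apply, Equiv.apply_symm_apply]; exact h1)

set_option maxHeartbeats 2000000 in
lemma fam_card_le (n : ℕ) (hn : 2 ≤ n) :
    (Finset.univ.filter (fun σ : Equiv.Perm (Fin n) =>
      Avoids σ p123 ∧ Avoids σ p213 ∧ (σ ⟨n - 1, Nat.sub_one_lt (by omega)⟩ : ℕ) = 1)).card ≤ 2^(n-2) := by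
  classical
  set z : Fin n := ⟨0, by omega⟩ with hz
  set o : Fin n := ⟨1, by omega⟩ with ho
  set T : Finset (Finset (Fin n)) := (Finset.univ \ {z, o}).powerset with hT
  have hTcard : T.card = 2^(n-2) := by
    rw [hT, Finset.card_powerset]
    congr 1
    rw [Finset.card_sdiff_of_subset (by intro a _; exact Finset.mem_univ a)]
    rw [Finset.card_univ, Fintype.card_fin]
    have : ({z, o} : Finset (Fin n)).card = 2 := by
      rw [Finset.card_insert_of_notMem (by
        simp only [Finset.mem_singleton]
        intro h
        have := congrArg Fin.val h
        simp [hz, ho] at this), Finset.card_singleton]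
    rw [this]
  rw [← hTcard]
  apply Finset.card_le_card_of_injOn
    (fun σ => (Finset.univ.filter (fun v : Fin n => ∃ u, u < v ∧ σ.symm u < σ.symm v)) \ {o})
  · -- maps to T
    intro σ hσ
    rw [hT, Finset.mem_coe, Finset.mem_powerset]
    intro v hv
    rw [Finset.mem_sdiff, Finset.mem_filter] at hv
    obtain ⟨⟨-, u, huv, -⟩, hvo⟩ := hv
    rw [Finset.mem_sdiff]
    refine ⟨Finset.mem_univ _, ?_⟩
    simp only [Finset.mem_insert, Finset.mem_singleton]
    push_neg
    refine ⟨?_, by simpa using hvo⟩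
    intro hvz
    subst hvz
    exact absurd huv (by simp [hz, Fin.lt_def])
  · -- injective
    intro σ hσ τ hτ hfeq
    simp only [Finset.mem_coe, Finset.mem_filter] at hσ hτ
    obtain ⟨-, hA1, hB1, hl1⟩ := hσ
    obtain ⟨-, hA2, hB2, hl2⟩ := hτ
    -- last value fact
    have hsym1 : σ.symm o = ⟨n-1, Nat.sub_one_lt (by omega)⟩ := by
      apply σ.injective
      rw [Equiv.apply_symm_apply]
      exact (Fin.ext hl1.symm)
    have hsym2 : τ.symm o = ⟨n-1, Nat.sub_one_lt (by omega)⟩ := by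
      apply τ.injective
      rw [Equiv.apply_symm_apply]
      exact (Fin.ext hl2.symm)
    -- 1 is always in the B-set
    have h1B : ∀ (ρ : Equiv.Perm (Fin n)), ρ.symm o = ⟨n-1, Nat.sub_one_lt (by omega)⟩ →
        o ∈ Finset.univ.filter (fun v : Fin n => ∃ u, u < v ∧ ρ.symm u < ρ.symm v) := by
      intro ρ hρ
      rw [Finset.mem_filter]
      refine ⟨Finset.mem_univ _, z, by simp [hz, ho, Fin.lt_def], ?_⟩
      rw [hρ]
      have hne : ρ.symm z ≠ ⟨n-1, Nat.sub_one_lt (by omega)⟩ := by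
        rw [← hρ]
        intro h
        have := ρ.symm.injective h
        simp [hz, ho, Fin.ext_iff] at this
      have := (ρ.symm z).2
      rw [Fin.lt_def]
      have hne' : (ρ.symm z : ℕ) ≠ n - 1 := fun h => hne (Fin.ext h)
      simp only []
      omega
    have hBeq : (Finset.univ.filter (fun v : Fin n => ∃ u, u < v ∧ σ.symm u < σ.symm v))
        = (Finset.univ.filter (fun v : Fin n => ∃ u, u < v ∧ τ.symm u < τ.symm v)) := by
      have h1 := h1B σ hsym1
      have h2 := h1B τ hsym2
      ext a
      by_cases ha : a = o
      · subst ha; simp [h1, h2]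
      · have := congrArg (fun s => a ∈ s) hfeq
        simp only [Finset.mem_sdiff, Finset.mem_singleton, eq_iff_iff] at this
        constructor
        · intro hmem
          exact ((this.mp ⟨hmem, ha⟩)).1
        · intro hmem
          exact ((this.mpr ⟨hmem, ha⟩)).1
    -- main induction
    have main : ∀ m : ℕ, ∀ u1 u2 : Fin n, u1.1 ≤ m → u2.1 ≤ m →
        (σ.symm u1 < σ.symm u2 ↔ τ.symm u1 < τ.symm u2) := by
      intro m
      induction m with
      | zero =>
        intro u1 u2 h1 h2
        have : u1 = u2 := Fin.ext (by omega)
        subst this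
        simp
      | succ m IH =>
        -- the core one-sided statement
        have core : ∀ u v : Fin n, u.1 ≤ m → v.1 = m + 1 →
            (σ.symm u < σ.symm v ↔ τ.symm u < τ.symm v) := by
          intro u v hu hv
          have huv : u < v := by rw [Fin.lt_def]; omega
          by_cases hb : v ∈ Finset.univ.filter
              (fun w : Fin n => ∃ u', u' < w ∧ σ.symm u' < σ.symm w)
          · -- v has a (unique) smaller element before it, in both σ and τ
            have hbτ : v ∈ Finset.univ.filter
                (fun w : Fin n => ∃ u', u' < w ∧ τ.symm u' < τ.symm w) := hBeq ▸ hb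
            rw [Finset.mem_filter] at hb hbτ
            obtain ⟨-, u0, hu0v, hu0b⟩ := hb
            obtain ⟨-, u0', hu0v', hu0b'⟩ := hbτ
            have hu0m : u0.1 ≤ m := by
              have := hu0v; rw [Fin.lt_def] at this; omega
            have hu0m' : u0'.1 ≤ m := by
              have := hu0v'; rw [Fin.lt_def] at this; omega
            -- u0 minimizes σ.symm among values < v
            have hmin : ∀ u' : Fin n, u' < v → σ.symm u0 ≤ σ.symm u' := by
              intro u' hu'v
              rcases eq_or_ne u' u0 with rfl | hne
              · exact le_refl _
              · by_contra hlt
                push_neg at hlt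
                exact uniq_vals hA1 hB1 hu0v hu'v hne.symm hu0b (hlt.trans hu0b)
            have hmin' : ∀ u' : Fin n, u' < v → τ.symm u0' ≤ τ.symm u' := by
              intro u' hu'v
              rcases eq_or_ne u' u0' with rfl | hne
              · exact le_refl _
              · by_contra hlt
                push_neg at hlt
                exact uniq_vals hA2 hB2 hu0v' hu'v hne.symm hu0b' (hlt.trans hu0b')
            have hu00 : u0 = u0' := by
              by_contra hne
              have hle := hmin u0' hu0v'
              have hlt : σ.symm u0 < σ.symm u0' :=
                lt_of_le_of_ne hle (fun h => hne (σ.symm.injective h))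
              have := (IH u0 u0' hu0m hu0m').mp hlt
              exact absurd this (not_lt.mpr (hmin' u0 hu0v))
            subst hu00
            constructor
            · intro h
              rcases eq_or_ne u u0 with rfl | hne
              · exact hu0b'
              · exact absurd (uniq_vals hA1 hB1 huv hu0v hne h hu0b) (fun f => f)
            · intro h
              rcases eq_or_ne u u0 with rfl | hne
              · exact hu0b
              · exact absurd (uniq_vals hA2 hB2 huv hu0v' hne h hu0b') (fun f => f)
          · -- no smaller element before v, for either
            have hbτ : v ∉ Finset.univ.filter
                (fun w : Fin n => ∃ u', u' < w ∧ τ.symm u' < τ.symm w) := hBeq ▸ hb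
            constructor
            · intro h
              exact absurd (Finset.mem_filter.mpr ⟨Finset.mem_univ _, u, huv, h⟩) hb
            · intro h
              exact absurd (Finset.mem_filter.mpr ⟨Finset.mem_univ _, u, huv, h⟩) hbτ
        intro u1 u2 h1 h2
        rcases Nat.lt_or_ge u1.1 (m+1) with hc1 | hc1 <;>
          rcases Nat.lt_or_ge u2.1 (m+1) with hc2 | hc2
        · exact IH u1 u2 (by omega) (by omega)
        · exact core u1 u2 (by omega) (by omega)
        · -- u1 is the new value
          have hcore := core u2 u1 (by omega) (by omega)
          have hne : u1 ≠ u2 := fun h => by subst h; omega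
          constructor
          · intro h
            rcases lt_trichotomy (τ.symm u1) (τ.symm u2) with hh | hh | hh
            · exact hh
            · exact absurd (τ.symm.injective hh) hne
            · exact absurd (hcore.mpr hh) (not_lt.mpr (le_of_lt h))
          · intro h
            rcases lt_trichotomy (σ.symm u1) (σ.symm u2) with hh | hh | hh
            · exact hh
            · exact absurd (σ.symm.injective hh) hne
            · exact absurd (hcore.mp hh) (not_lt.mpr (le_of_lt h))
        · have : u1 = u2 := Fin.ext (by omega)
          subst this
          simp
    -- conclude σ = τ
    have hiff : ∀ u1 u2 : Fin n, (σ.symm u1 < σ.symm u2 ↔ τ.symm u1 < τ.symm u2) := by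
      intro u1 u2
      exact main (n-1) u1 u2 (by have := u1.2; omega) (by have := u2.2; omega)
    have hf : StrictMono (fun p => σ.symm (τ p)) := by
      intro p q hpq
      have : τ.symm (τ p) < τ.symm (τ q) := by
        rw [Equiv.symm_apply_apply, Equiv.symm_apply_apply]; exact hpq
      exact (hiff (τ p) (τ q)).mpr this
    have hg : StrictMono (fun p => τ.symm (σ p)) := by
      intro p q hpq
      have : σ.symm (σ p) < σ.symm (σ q) := by
        rw [Equiv.symm_apply_apply, Equiv.symm_apply_apply]; exact hpq
      exact (hiff (σ p) (σ q)).mp this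
    haveI : WellFoundedLT (Fin n) := Finite.to_wellFoundedLT
    have hid : ∀ p : Fin n, σ.symm (τ p) = p := by
      intro p
      have h1 : p ≤ σ.symm (τ p) := hf.le_apply
      have h2 : σ.symm (τ p) ≤ τ.symm (σ (σ.symm (τ p))) := hg.le_apply
      rw [Equiv.apply_symm_apply, Equiv.symm_apply_apply] at h2
      exact le_antisymm h2 h1
    apply Equiv.ext
    intro p
    have := hid p
    have h2 : σ (σ.symm (τ p)) = σ p := congrArg σ this
    rw [Equiv.apply_symm_apply] at h2
    exact h2.symm

end CrsAux

open CrsAux in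
theorem count_crossings_123_213_val (n k : ℕ) (hn : 2 ≤ n) :
    (Finset.univ.filter (fun σ : Equiv.Perm (Fin n) =>
        Avoids σ p123 ∧ Avoids σ p213 ∧ (σ ⟨n - 1, by omega⟩ : ℕ) = 1 ∧ crs σ = k)).card =
      Nat.choose (n - 2) k := by
  classical
  -- the lower bound, for every k
  have hlow : ∀ j : ℕ, Nat.choose (n-2) j ≤
      (Finset.univ.filter (fun σ : Equiv.Perm (Fin n) =>
        Avoids σ p123 ∧ Avoids σ p213 ∧ (σ ⟨n - 1, by omega⟩ : ℕ) = 1 ∧ crs σ = j)).card := by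
    intro j
    rw [← countS n hn j]
    apply Finset.card_le_card_of_injOn (fun M => sigmaPerm n M)
    · intro M hM
      rw [Finset.mem_coe, Finset.mem_filter, Finset.mem_powerset] at hM
      obtain ⟨hsub, hfj⟩ := hM
      rw [Finset.mem_coe, Finset.mem_filter]
      refine ⟨Finset.mem_univ _, sigma_avoids123 n M, sigma_avoids213 n M,
        sigma_last n M hn hsub, ?_⟩
      rw [crs_sigma n M hn hsub]
      exact hfj
    · intro M1 h1 M2 h2 heq
      rw [Finset.mem_coe, Finset.mem_filter, Finset.mem_powerset] at h1 h2
      exact sigma_injM n hn h1.1 h2.1 heq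
  -- family and fibers
  set Fam := (Finset.univ.filter (fun σ : Equiv.Perm (Fin n) =>
      Avoids σ p123 ∧ Avoids σ p213 ∧ (σ ⟨n - 1, by omega⟩ : ℕ) = 1)) with hFam
  have hfib : ∀ j : ℕ, (Finset.univ.filter (fun σ : Equiv.Perm (Fin n) =>
        Avoids σ p123 ∧ Avoids σ p213 ∧ (σ ⟨n - 1, by omega⟩ : ℕ) = 1 ∧ crs σ = j))
      = Fam.filter (fun σ => crs σ = j) := by
    intro j
    rw [hFam, Finset.filter_filter]
    apply Finset.filter_congr
    intro σ _
    tauto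
  have hdisj : ∀ j1 ∈ Finset.range (n-1), ∀ j2 ∈ Finset.range (n-1), j1 ≠ j2 →
      Disjoint (Fam.filter (fun σ => crs σ = j1)) (Fam.filter (fun σ => crs σ = j2)) := by
    intro j1 _ j2 _ hne
    rw [Finset.disjoint_left]
    intro σ h1 h2
    rw [Finset.mem_filter] at h1 h2
    exact hne (h1.2 ▸ h2.2)
  have hsub : (Finset.range (n-1)).biUnion (fun j => Fam.filter (fun σ => crs σ = j)) ⊆ Fam := by
    intro σ hσ
    rw [Finset.mem_biUnion] at hσ
    obtain ⟨j, -, hj⟩ := hσ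
    exact (Finset.mem_filter.mp hj).1
  have hsum1 : ∑ j ∈ Finset.range (n-1), (Fam.filter (fun σ => crs σ = j)).card
      = ((Finset.range (n-1)).biUnion (fun j => Fam.filter (fun σ => crs σ = j))).card :=
    (Finset.card_biUnion hdisj).symm
  have hchoosesum : ∑ j ∈ Finset.range (n-1), Nat.choose (n-2) j = 2^(n-2) := by
    have := Nat.sum_range_choose (n-2)
    rw [show n - 2 + 1 = n - 1 by omega] at this
    exact this
  have hFamle : Fam.card ≤ 2^(n-2) := fam_card_le n hn
  have hsumle : ∑ j ∈ Finset.range (n-1), (Fam.filter (fun σ => crs σ = j)).card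
      ≤ ∑ j ∈ Finset.range (n-1), Nat.choose (n-2) j := by
    rw [hchoosesum, hsum1]
    exact le_trans (Finset.card_le_card hsub) hFamle
  have hgesum : ∀ j ∈ Finset.range (n-1),
      Nat.choose (n-2) j ≤ (Fam.filter (fun σ => crs σ = j)).card := by
    intro j _
    rw [← hfib j]
    exact hlow j
  have heach : ∀ j ∈ Finset.range (n-1),
      Nat.choose (n-2) j = (Fam.filter (fun σ => crs σ = j)).card := by
    have hs := Finset.sum_le_sum hgesum
    have heq : ∑ j ∈ Finset.range (n-1), Nat.choose (n-2) j
        = ∑ j ∈ Finset.range (n-1), (Fam.filter (fun σ => crs σ = j)).card :=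
      le_antisymm hs hsumle
    exact (Finset.sum_eq_sum_iff_of_le hgesum).mp heq
  rcases Nat.lt_or_ge k (n-1) with hk | hk
  · rw [hfib k]
    exact (heach k (Finset.mem_range.mpr hk)).symm
  · -- k too large : both sides zero
    rw [Nat.choose_eq_zero_of_lt (by omega), hfib k, Finset.card_eq_zero,
      Finset.filter_eq_empty_iff]
    intro σ hσ
    intro hcrs
    -- the union equals Fam
    have hs2 : ∑ j ∈ Finset.range (n-1), Nat.choose (n-2) j
        = ∑ j ∈ Finset.range (n-1), (Fam.filter (fun σ => crs σ = j)).card :=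
      Finset.sum_congr rfl heach
    have hcards : ((Finset.range (n-1)).biUnion (fun j => Fam.filter (fun σ => crs σ = j))).card
        = 2^(n-2) := by
      rw [← hsum1]
      omega
    have hunion : ((Finset.range (n-1)).biUnion (fun j => Fam.filter (fun σ => crs σ = j))) = Fam :=
      Finset.eq_of_subset_of_card_le hsub (by omega)
    have hσ2 : σ ∈ (Finset.range (n-1)).biUnion (fun j => Fam.filter (fun σ => crs σ = j)) := by
      rw [hunion]; exact hσ
    rw [Finset.mem_biUnion] at hσ2
    obtain ⟨j, hjr, hj⟩ := hσ2
    rw [Finset.mem_range] at hjr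
    rw [Finset.mem_filter] at hj
    omega
end

section
/- For all n ≥ 2, F_n(312,213;q) = F_{n-1}(312,213;q) + F_{n-1}(231,213;q), where F_m(τ₁,τ₂;q) = Σ_{σ ∈ S_m(τ₁,τ₂)} q^{crs(σ)} over permutations of [m] avoiding both τ₁ and τ₂. -/
open scoped Classical

namespace Aux

variable {m : ℕ}

/-- prepend a fixed point 0 -/
def e1 (τ : Equiv.Perm (Fin m)) : Equiv.Perm (Fin (m+1)) :=
  ⟨Fin.cases 0 (fun p => (τ p).succ),
   Fin.cases 0 (fun v => (τ.symm v).succ),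
   by intro i; cases i using Fin.cases <;> simp,
   by intro i; cases i using Fin.cases <;> simp⟩

@[simp] lemma e1_zero (τ : Equiv.Perm (Fin m)) : e1 τ 0 = 0 := rfl
@[simp] lemma e1_succ (τ : Equiv.Perm (Fin m)) (p : Fin m) : e1 τ p.succ = (τ p).succ := by
  simp [e1]

/-- append 0 at the last position; first m positions are p ↦ τ⁻¹(p)+1 -/
def e2 (τ : Equiv.Perm (Fin m)) : Equiv.Perm (Fin (m+1)) :=
  ⟨Fin.lastCases 0 (fun p => (τ.symm p).succ),
   Fin.cases (Fin.last m) (fun v => (τ v).castSucc),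
   by intro i; cases i using Fin.lastCases <;> simp,
   by intro i; cases i using Fin.cases <;> simp⟩

@[simp] lemma e2_last (τ : Equiv.Perm (Fin m)) : e2 τ (Fin.last m) = 0 := by
  simp [e2]
@[simp] lemma e2_castSucc (τ : Equiv.Perm (Fin m)) (p : Fin m) :
    e2 τ p.castSucc = (τ.symm p).succ := by
  simp [e2]

variable {n : ℕ} (σ : Equiv.Perm (Fin n))

lemma contains_of_triple (t : Fin 3 → ℕ) {i j k : Fin n} (hij : i < j) (hjk : j < k)
    (h01 : σ i < σ j ↔ t 0 < t 1) (h10 : σ j < σ i ↔ t 1 < t 0)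
    (h02 : σ i < σ k ↔ t 0 < t 2) (h20 : σ k < σ i ↔ t 2 < t 0)
    (h12 : σ j < σ k ↔ t 1 < t 2) (h21 : σ k < σ j ↔ t 2 < t 1) : Contains σ t := by
  refine ⟨![i, j, k], ?_, ?_⟩
  · intro x y hxy
    fin_cases x <;> fin_cases y <;>
      first
        | exact absurd hxy (by decide)
        | exact hij
        | exact hjk
        | exact hij.trans hjk
  · intro x y
    fin_cases x <;> fin_cases y <;>
      first
        | exact iff_of_false (lt_irrefl _) (lt_irrefl _)
        | exact h01
        | exact h02
        | exact h10
        | exact h12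
        | exact h20
        | exact h21

lemma contains312_iff : Contains σ p312 ↔
    ∃ i j k : Fin n, i < j ∧ j < k ∧ σ j < σ k ∧ σ k < σ i := by
  constructor
  · rintro ⟨f, hm, hiff⟩
    exact ⟨f 0, f 1, f 2, hm (by decide), hm (by decide),
      (hiff 1 2).mpr (by decide), (hiff 2 0).mpr (by decide)⟩
  · rintro ⟨i, j, k, hij, hjk, h1, h2⟩
    exact contains_of_triple σ p312 hij hjk
      (iff_of_false (asymm (h1.trans h2)) (by decide))
      (iff_of_true (h1.trans h2) (by decide))
      (iff_of_false (asymm h2) (by decide))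
      (iff_of_true h2 (by decide))
      (iff_of_true h1 (by decide))
      (iff_of_false (asymm h1) (by decide))

lemma contains213_iff : Contains σ p213 ↔
    ∃ i j k : Fin n, i < j ∧ j < k ∧ σ j < σ i ∧ σ i < σ k := by
  constructor
  · rintro ⟨f, hm, hiff⟩
    exact ⟨f 0, f 1, f 2, hm (by decide), hm (by decide),
      (hiff 1 0).mpr (by decide), (hiff 0 2).mpr (by decide)⟩
  · rintro ⟨i, j, k, hij, hjk, h1, h2⟩
    exact contains_of_triple σ p213 hij hjk
      (iff_of_false (asymm h1) (by decide))
      (iff_of_true h1 (by decide))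
      (iff_of_true h2 (by decide))
      (iff_of_false (asymm h2) (by decide))
      (iff_of_true (h1.trans h2) (by decide))
      (iff_of_false (asymm (h1.trans h2)) (by decide))

lemma contains231_iff : Contains σ p231 ↔
    ∃ i j k : Fin n, i < j ∧ j < k ∧ σ k < σ i ∧ σ i < σ j := by
  constructor
  · rintro ⟨f, hm, hiff⟩
    exact ⟨f 0, f 1, f 2, hm (by decide), hm (by decide),
      (hiff 2 0).mpr (by decide), (hiff 0 1).mpr (by decide)⟩
  · rintro ⟨i, j, k, hij, hjk, h1, h2⟩
    exact contains_of_triple σ p231 hij hjk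
      (iff_of_true h2 (by decide))
      (iff_of_false (asymm h2) (by decide))
      (iff_of_false (asymm h1) (by decide))
      (iff_of_true h1 (by decide))
      (iff_of_false (asymm (h1.trans h2)) (by decide))
      (iff_of_true (h1.trans h2) (by decide))
/-- triple characterization of avoiding {312, 213} -/
def condA : Prop := ∀ i j k : Fin n, i < j → j < k → σ j < σ i → σ k < σ j

lemma avoidsA_iff : (Avoids σ p312 ∧ Avoids σ p213) ↔ condA σ := by
  unfold Avoids condA
  rw [contains312_iff, contains213_iff]
  constructor
  · rintro ⟨h3, h2⟩ i j k hij hjk hji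
    by_contra hk
    have hkj : σ j < σ k := by
      rcases lt_trichotomy (σ j) (σ k) with h | h | h
      · exact h
      · exact absurd (σ.injective h) (hjk.ne)
      · exact absurd h hk
    rcases lt_trichotomy (σ k) (σ i) with h | h | h
    · exact h3 ⟨i, j, k, hij, hjk, hkj, h⟩
    · exact absurd (σ.injective h) (hij.trans hjk).ne'
    · exact h2 ⟨i, j, k, hij, hjk, hji, h⟩
  · intro h
    constructor
    · rintro ⟨i, j, k, hij, hjk, h1, h2⟩
      exact absurd (h i j k hij hjk (h1.trans h2)) (asymm h1)
    · rintro ⟨i, j, k, hij, hjk, h1, h2⟩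
      exact absurd (h i j k hij hjk h1) (asymm (h1.trans h2))

/-- triple characterization of avoiding {231, 213} -/
def condC : Prop := ∀ i j k : Fin n, i < j → j < k →
  ¬ (σ j < σ i ∧ σ i < σ k) ∧ ¬ (σ k < σ i ∧ σ i < σ j)

lemma avoidsC_iff : (Avoids σ p231 ∧ Avoids σ p213) ↔ condC σ := by
  unfold Avoids condC
  rw [contains231_iff, contains213_iff]
  constructor
  · rintro ⟨h1, h2⟩ i j k hij hjk
    exact ⟨fun ⟨a, b⟩ => h2 ⟨i, j, k, hij, hjk, a, b⟩,
           fun ⟨a, b⟩ => h1 ⟨i, j, k, hij, hjk, a, b⟩⟩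
  · intro h
    constructor
    · rintro ⟨i, j, k, hij, hjk, h1, h2⟩
      exact (h i j k hij hjk).2 ⟨h1, h2⟩
    · rintro ⟨i, j, k, hij, hjk, h1, h2⟩
      exact (h i j k hij hjk).1 ⟨h1, h2⟩


section Transfer
open Fin
variable {m : ℕ}

lemma condA_e1_iff (τ : Equiv.Perm (Fin m)) : condA (e1 τ) ↔ condA τ := by
  constructor
  · intro h i j k hij hjk hji
    have := h i.succ j.succ k.succ (succ_lt_succ_iff.mpr hij) (succ_lt_succ_iff.mpr hjk)
      (by simpa [succ_lt_succ_iff] using hji)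
    simpa [succ_lt_succ_iff] using this
  · intro h i j k hij hjk hji
    induction i using Fin.cases with
    | zero =>
      rw [e1_zero] at hji
      exact absurd hji (Fin.not_lt_zero _)
    | succ i' =>
      induction j using Fin.cases with
      | zero => exact absurd hij (Fin.not_lt_zero _)
      | succ j' =>
        induction k using Fin.cases with
        | zero => exact absurd hjk (Fin.not_lt_zero _)
        | succ k' =>
          simp only [e1_succ, succ_lt_succ_iff] at hij hjk hji ⊢
          exact h i' j' k' hij hjk hji

lemma condA_e2_iff (τ : Equiv.Perm (Fin m)) : condA (e2 τ) ↔ condC τ := by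
  constructor
  · intro h a b c hab hbc
    constructor
    · rintro ⟨h1, h2⟩
      have := h (τ b).castSucc (τ a).castSucc (τ c).castSucc
        (castSucc_lt_castSucc_iff.mpr h1) (castSucc_lt_castSucc_iff.mpr h2)
        (by simp [succ_lt_succ_iff, hab])
      simp only [e2_castSucc, Equiv.symm_apply_apply, succ_lt_succ_iff] at this
      exact absurd (hab.trans (hbc.trans this)) (lt_irrefl _)
    · rintro ⟨h1, h2⟩
      have := h (τ c).castSucc (τ a).castSucc (τ b).castSucc
        (castSucc_lt_castSucc_iff.mpr h1) (castSucc_lt_castSucc_iff.mpr h2)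
        (by simp [succ_lt_succ_iff, hab.trans hbc])
      simp only [e2_castSucc, Equiv.symm_apply_apply, succ_lt_succ_iff] at this
      exact absurd (hab.trans this) (lt_irrefl _)
  · intro h i j k hij hjk hji
    induction k using Fin.lastCases with
    | last =>
      rw [e2_last]
      have hj : j ≠ last m := ne_of_lt hjk
      obtain ⟨j', rfl⟩ := exists_castSucc_eq.mpr hj
      rw [e2_castSucc]
      exact succ_pos _
    | cast k' =>
      have hj : j ≠ last m := ne_of_lt (hjk.trans_le (le_last _))
      obtain ⟨j', rfl⟩ := exists_castSucc_eq.mpr hj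
      have hi : i ≠ last m := ne_of_lt (hij.trans_le (le_last _))
      obtain ⟨i', rfl⟩ := exists_castSucc_eq.mpr hi
      simp only [e2_castSucc, succ_lt_succ_iff, castSucc_lt_castSucc_iff] at hij hjk hji ⊢
      set ρ := τ.symm with hρ
      by_contra hk
      have hne : ρ k' ≠ ρ j' := fun hh => (ne_of_gt hjk) (τ.symm.injective hh)
      have hjk2 : ρ j' < ρ k' := lt_of_le_of_ne (not_lt.mp hk) (Ne.symm hne)
      have hτρ : ∀ x, τ (ρ x) = x := fun x => τ.apply_symm_apply x
      rcases lt_trichotomy (ρ i') (ρ k') with hc | hc | hc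
      · exact (h (ρ j') (ρ i') (ρ k') hji hc).1 (by rw [hτρ, hτρ, hτρ]; exact ⟨hij, hjk⟩)
      · exact absurd (τ.symm.injective hc) (ne_of_lt (hij.trans hjk))
      · exact (h (ρ j') (ρ k') (ρ i') hjk2 hc).2 (by rw [hτρ, hτρ, hτρ]; exact ⟨hij, hjk⟩)

lemma last_eq_zero_of_condA (σ : Equiv.Perm (Fin (m+1))) (hm : m ≠ 0)
    (h : condA σ) (h0 : σ 0 ≠ 0) : σ (last m) = 0 := by
  by_contra hlast
  set j := σ.symm 0 with hj
  have hσj : σ j = 0 := σ.apply_symm_apply 0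
  have hj0 : j ≠ 0 := fun hh => h0 (by rw [hh] at hσj; exact hσj)
  have hjlast : j ≠ last m := fun hh => hlast (by rw [hh] at hσj; exact hσj)
  have hjlt : j < last m := lt_of_le_of_ne (le_last j) hjlast
  have h0j : (0 : Fin (m+1)) < j := Fin.pos_iff_ne_zero.mpr hj0
  have := h 0 j (last m) h0j hjlt (by rw [hσj]; exact Fin.pos_iff_ne_zero.mpr h0)
  rw [hσj] at this
  exact absurd this (Fin.not_lt_zero _)

end Transfer

section Crs
open Fin
variable {m : ℕ}

lemma crs_e1 (τ : Equiv.Perm (Fin m)) : crs (e1 τ) = crs τ := by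
  unfold crs
  symm
  apply Finset.card_bij (fun (p : Fin m × Fin m) _ => (p.1.succ, p.2.succ))
  · intro a ha
    simp only [Finset.mem_filter, Finset.mem_univ, true_and] at ha ⊢
    simpa only [e1_succ, succ_lt_succ_iff, succ_le_succ_iff] using ha
  · intro a _ b _ hab
    simp only [Prod.ext_iff, Fin.succ_inj] at hab
    exact Prod.ext hab.1 hab.2
  · intro b hb
    simp only [Finset.mem_filter, Finset.mem_univ, true_and] at hb
    have hlt : b.1 < b.2 := by rcases hb with ⟨h1, _, _⟩ | ⟨_, _, h3⟩ <;> assumption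
    have hb2 : b.2 ≠ 0 := Fin.pos_iff_ne_zero.mp (lt_of_le_of_lt (Fin.zero_le _) hlt)
    have hb1 : b.1 ≠ 0 := by
      intro h0
      rcases hb with ⟨h1, h2, h3⟩ | ⟨h1, h2, h3⟩
      · rw [h0, e1_zero] at h2
        exact absurd h2 (Fin.not_lt_zero _)
      · rw [h0] at h2
        have hz : e1 τ b.2 = 0 := le_antisymm h2 (Fin.zero_le _)
        exact hb2 ((e1 τ).injective (hz.trans (e1_zero τ).symm))
    obtain ⟨a1, ha1⟩ := Fin.exists_succ_eq.mpr hb1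
    obtain ⟨a2, ha2⟩ := Fin.exists_succ_eq.mpr hb2
    refine ⟨(a1, a2), ?_, by simp [ha1, ha2]⟩
    simp only [Finset.mem_filter, Finset.mem_univ, true_and]
    rw [← ha1, ← ha2] at hb
    simpa only [e1_succ, succ_lt_succ_iff, succ_le_succ_iff] using hb

lemma crs_e2 (τ : Equiv.Perm (Fin m)) : crs (e2 τ) = crs τ := by
  unfold crs
  symm
  apply Finset.card_bij (fun (p : Fin m × Fin m) _ => ((τ p.1).castSucc, (τ p.2).castSucc))
  · intro a ha
    simp only [Finset.mem_filter, Finset.mem_univ, true_and] at ha ⊢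
    simp only [e2_castSucc, Equiv.symm_apply_apply, castSucc_lt_castSucc_iff,
      castSucc_lt_succ_iff, succ_le_castSucc_iff, succ_lt_succ_iff]
    tauto
  · intro a _ b _ hab
    simp only [Prod.ext_iff, Fin.castSucc_inj] at hab
    exact Prod.ext (τ.injective hab.1) (τ.injective hab.2)
  · intro b hb
    simp only [Finset.mem_filter, Finset.mem_univ, true_and] at hb
    have hlt : b.1 < b.2 := by rcases hb with ⟨h1, _, _⟩ | ⟨_, _, h3⟩ <;> assumption
    have hb2 : b.2 ≠ last m := by
      intro h0
      rcases hb with ⟨h1, h2, h3⟩ | ⟨h1, h2, h3⟩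
      · rw [h0] at h2
        exact absurd h2 (not_lt.mpr (le_last _))
      · rw [h0, e2_last] at h1
        exact absurd h1 (Fin.not_lt_zero _)
    have hb1 : b.1 ≠ last m := by
      intro h0
      rw [h0] at hlt
      exact absurd hlt (not_lt.mpr (le_last _))
    obtain ⟨c1, hc1⟩ := Fin.exists_castSucc_eq.mpr hb1
    obtain ⟨c2, hc2⟩ := Fin.exists_castSucc_eq.mpr hb2
    refine ⟨(τ.symm c1, τ.symm c2), ?_, by simp [hc1, hc2]⟩
    simp only [Finset.mem_filter, Finset.mem_univ, true_and]
    rw [← hc1, ← hc2] at hb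
    simp only [e2_castSucc, castSucc_lt_castSucc_iff, castSucc_lt_succ_iff,
      succ_le_castSucc_iff, succ_lt_succ_iff] at hb
    simp only [Equiv.apply_symm_apply]
    tauto

end Crs

section Bij
open Fin
variable {m : ℕ}

lemma e1_injective : Function.Injective (e1 (m := m)) := by
  intro τ1 τ2 h
  apply Equiv.ext
  intro p
  have := congrArg (fun σ : Equiv.Perm (Fin (m+1)) => σ p.succ) h
  simpa only [e1_succ, Fin.succ_inj] using this

lemma e1_surj (σ : Equiv.Perm (Fin (m+1))) (h0 : σ 0 = 0) : ∃ τ, e1 τ = σ := by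
  have hne : ∀ p : Fin m, σ p.succ ≠ 0 := by
    intro p hp
    rw [← h0] at hp
    exact Fin.succ_ne_zero p (σ.injective hp)
  have hne' : ∀ v : Fin m, σ.symm v.succ ≠ 0 := by
    intro v hv
    have : σ 0 = v.succ := by rw [← hv, σ.apply_symm_apply]
    rw [h0] at this
    exact Fin.succ_ne_zero v this.symm
  refine ⟨⟨fun p => (σ p.succ).pred (hne p), fun v => (σ.symm v.succ).pred (hne' v), ?_, ?_⟩, ?_⟩
  · intro p
    simp only [Fin.succ_pred, Equiv.symm_apply_apply, Fin.pred_succ]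
  · intro v
    simp only [Fin.succ_pred, Equiv.apply_symm_apply, Fin.pred_succ]
  · apply Equiv.ext
    intro i
    induction i using Fin.cases with
    | zero => rw [e1_zero, h0]
    | succ p => rw [e1_succ]; exact Fin.succ_pred _ (hne p)

lemma e2_injective : Function.Injective (e2 (m := m)) := by
  intro τ1 τ2 h
  have hsymm : τ1.symm = τ2.symm := by
    apply Equiv.ext
    intro p
    have := congrArg (fun σ : Equiv.Perm (Fin (m+1)) => σ p.castSucc) h
    simpa only [e2_castSucc, Fin.succ_inj] using this
  calc τ1 = τ1.symm.symm := by simp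
  _ = τ2.symm.symm := by rw [hsymm]
  _ = τ2 := by simp

lemma e2_surj (σ : Equiv.Perm (Fin (m+1))) (hl : σ (last m) = 0) : ∃ τ, e2 τ = σ := by
  have hne : ∀ v : Fin m, σ.symm v.succ ≠ last m := by
    intro v hv
    have : σ (last m) = v.succ := by rw [← hv, σ.apply_symm_apply]
    rw [hl] at this
    exact Fin.succ_ne_zero v this.symm
  have hne' : ∀ p : Fin m, σ p.castSucc ≠ 0 := by
    intro p hp
    rw [← hl] at hp
    have := σ.injective hp
    exact absurd this (ne_of_lt (Fin.castSucc_lt_last p))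
  refine ⟨⟨fun v => (σ.symm v.succ).castPred (hne v), fun p => (σ p.castSucc).pred (hne' p), ?_, ?_⟩, ?_⟩
  · intro v
    simp only [Fin.castSucc_castPred, Equiv.apply_symm_apply, Fin.pred_succ]
  · intro p
    simp only [Fin.succ_pred, Equiv.symm_apply_apply, Fin.castPred_castSucc]
  · apply Equiv.ext
    intro i
    induction i using Fin.lastCases with
    | last => rw [e2_last, hl]
    | cast p =>
      rw [e2_castSucc]
      show ((σ p.castSucc).pred (hne' p)).succ = σ p.castSucc
      exact Fin.succ_pred _ _

end Bij

end Aux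

theorem Fpoly_312_213 (n : ℕ) (hn : 2 ≤ n) :
    Fpoly n (fun σ => Avoids σ p312 ∧ Avoids σ p213) =
      Fpoly (n - 1) (fun σ => Avoids σ p312 ∧ Avoids σ p213)
        + Fpoly (n - 1) (fun σ => Avoids σ p231 ∧ Avoids σ p213) := by
  obtain ⟨k, rfl⟩ : ∃ k, n = k + 2 := ⟨n - 2, by omega⟩
  show Fpoly (k+2) _ = Fpoly (k+1) _ + Fpoly (k+1) _
  have hlast0 : (0 : Fin (k+2)) ≠ Fin.last (k+1) := by
    simp [Fin.ext_iff]
  unfold Fpoly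
  beta_reduce
  rw [← Finset.sum_filter_add_sum_filter_not Finset.univ
    (fun σ : Equiv.Perm (Fin (k+2)) => σ 0 = 0)]
  congr 1
  · symm
    apply Finset.sum_bij (fun (τ : Equiv.Perm (Fin (k+1))) _ => Aux.e1 τ)
    · intro τ _
      simp only [Finset.mem_filter, Finset.mem_univ, true_and, Aux.e1_zero]
    · intro τ1 _ τ2 _ h
      exact Aux.e1_injective h
    · intro σ hσ
      simp only [Finset.mem_filter, Finset.mem_univ, true_and] at hσ
      obtain ⟨τ, hτ⟩ := Aux.e1_surj σ hσ
      exact ⟨τ, Finset.mem_univ τ, hτ⟩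
    · intro τ _
      have hiff : (Avoids (Aux.e1 τ) p312 ∧ Avoids (Aux.e1 τ) p213) ↔
          (Avoids τ p312 ∧ Avoids τ p213) := by
        rw [Aux.avoidsA_iff, Aux.avoidsA_iff, Aux.condA_e1_iff]
      simp only [Aux.crs_e1, hiff]
      exact ite_congr rfl (fun _ => rfl) (fun _ => rfl)
  · -- restrict to σ with σ (last) = 0
    have hsub : Finset.univ.filter (fun σ : Equiv.Perm (Fin (k+2)) => σ (Fin.last (k+1)) = 0)
        ⊆ Finset.univ.filter (fun σ : Equiv.Perm (Fin (k+2)) => ¬ σ 0 = 0) := by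
      intro σ hσ
      simp only [Finset.mem_filter, Finset.mem_univ, true_and] at hσ ⊢
      intro h0
      exact hlast0 (σ.injective (h0.trans hσ.symm))
    rw [← Finset.sum_subset hsub]
    · symm
      apply Finset.sum_bij (fun (τ : Equiv.Perm (Fin (k+1))) _ => Aux.e2 τ)

      · intro τ _
        simp only [Finset.mem_filter, Finset.mem_univ, true_and, Aux.e2_last]
      · intro τ1 _ τ2 _ h
        exact Aux.e2_injective h
      · intro σ hσ
        simp only [Finset.mem_filter, Finset.mem_univ, true_and] at hσ
        obtain ⟨τ, hτ⟩ := Aux.e2_surj σ hσ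
        exact ⟨τ, Finset.mem_univ τ, hτ⟩
      · intro τ _
        have hiff : (Avoids (Aux.e2 τ) p312 ∧ Avoids (Aux.e2 τ) p213) ↔
            (Avoids τ p231 ∧ Avoids τ p213) := by
          rw [Aux.avoidsA_iff, Aux.condA_e2_iff, Aux.avoidsC_iff]
        simp only [Aux.crs_e2, hiff]
        exact ite_congr rfl (fun _ => rfl) (fun _ => rfl)
    · intro σ hσin hσnot
      simp only [Finset.mem_filter, Finset.mem_univ, true_and] at hσin hσnot
      rw [if_neg]
      intro hA
      exact hσnot (Aux.last_eq_zero_of_condA σ (Nat.succ_ne_zero k)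
        ((Aux.avoidsA_iff σ).mp hA) hσin)
end

section
/- For all n ≥ 1 and k ∈ [n], the map Ψ_{n,k} sending σ^{(k,1)} to rc(σ)^{(n+1-k,1)} is a bijection from {π ∈ S_n : π(k)=1} to {π ∈ S_n : π(n+1−k)=1} that preserves the number of crossings; in particular Σ_{σ ∈ S_n, σ(k)=1} q^{crs(σ)} = Σ_{σ ∈ S_n, σ(n+1-k)=1} q^{crs(σ)}. -/
open scoped Classical

/-- Insertion of the value 1 (here 0-based: value 0) at position k into σ. -/
noncomputable def insertAt {m : ℕ} (k : Fin (m + 1)) (σ : Equiv.Perm (Fin m)) :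
    Equiv.Perm (Fin (m + 1)) :=
  (Fin.cycleRange k).trans (Equiv.Perm.decomposeFin.symm (0, σ))

/-- Reverse-complement of a permutation. -/
noncomputable def rcPerm {m : ℕ} (σ : Equiv.Perm (Fin m)) : Equiv.Perm (Fin m) :=
  (Fin.revPerm.trans σ).trans Fin.revPerm

section Aux
variable {m : ℕ}

lemma rcPerm_apply (σ : Equiv.Perm (Fin m)) (i : Fin m) : rcPerm σ i = (σ i.rev).rev := rfl

lemma rcPerm_rcPerm (σ : Equiv.Perm (Fin m)) : rcPerm (rcPerm σ) = σ := by
  ext i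
  simp [rcPerm, Fin.rev_rev]

lemma insertAt_self (k : Fin (m+1)) (σ : Equiv.Perm (Fin m)) : insertAt k σ k = 0 := by
  simp [insertAt, Fin.cycleRange_self]

lemma insertAt_lt (k : Fin (m+1)) (σ : Equiv.Perm (Fin m)) (i : Fin (m+1))
    (h : (i : ℕ) < (k : ℕ)) :
    insertAt k σ i = (σ ⟨i, lt_of_lt_of_le h (Nat.lt_succ_iff.mp k.isLt)⟩).succ := by
  have hlt : i < k := h
  have h1 : Fin.cycleRange k i = Fin.succ ⟨i, lt_of_lt_of_le h (Nat.lt_succ_iff.mp k.isLt)⟩ := by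
    rw [Fin.cycleRange_of_lt hlt]
    apply Fin.ext
    rw [Fin.val_add_one_of_lt]
    · simp
    · exact lt_of_lt_of_le hlt (Fin.le_last k)
  rw [insertAt, Equiv.trans_apply, h1, Equiv.Perm.decomposeFin_symm_apply_succ]
  simp

lemma insertAt_gt (k : Fin (m+1)) (σ : Equiv.Perm (Fin m)) (i : Fin (m+1))
    (h : (k : ℕ) < (i : ℕ)) :
    insertAt k σ i = (σ ⟨(i : ℕ) - 1, by omega⟩).succ := by
  have hlt : k < i := h
  have h1 : Fin.cycleRange k i = Fin.succ ⟨(i : ℕ) - 1, by omega⟩ := by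
    rw [Fin.cycleRange_of_gt hlt]
    apply Fin.ext
    simp
    omega
  rw [insertAt, Equiv.trans_apply, h1, Equiv.Perm.decomposeFin_symm_apply_succ]
  simp

end Aux

noncomputable def PsiMap {m : ℕ} (π : Equiv.Perm (Fin (m+1))) : Equiv.Perm (Fin (m+1)) :=
  (rcPerm π).trans (finRotate (m+1))

section Psi
variable {m : ℕ}

lemma PsiMap_val (π : Equiv.Perm (Fin (m+1))) (i : Fin (m+1)) :
    ((PsiMap π) i : ℕ) = if (π i.rev : ℕ) = 0 then 0 else m + 1 - (π i.rev : ℕ) := by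
  have h1 : PsiMap π i = (π i.rev).rev + 1 := by
    simp [PsiMap, rcPerm, finRotate_succ_apply]
  have hv : ((π i.rev).rev : ℕ) = m - (π i.rev : ℕ) := by
    rw [Fin.val_rev]; omega
  have hb : (π i.rev : ℕ) < m + 1 := (π i.rev).isLt
  have hc : ((π i.rev).rev = Fin.last m) ↔ ((π i.rev : ℕ) = 0) := by
    rw [Fin.ext_iff, Fin.val_last, hv]; omega
  rw [h1, Fin.val_add_one]
  split_ifs with h0 h2 h2
  · rfl
  · exact absurd (hc.mp h0) h2
  · exact absurd (hc.mpr h2) h0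
  · rw [hv]; omega

end Psi

section Psi2
variable {m : ℕ}

lemma insertAt_val_lt (k : Fin (m+1)) (σ : Equiv.Perm (Fin m)) (i : Fin (m+1)) (j : Fin m)
    (h : (i : ℕ) < (k : ℕ)) (hj : (j : ℕ) = (i : ℕ)) :
    ((insertAt k σ i : Fin (m+1)) : ℕ) = (σ j : ℕ) + 1 := by
  rw [insertAt_lt k σ i h]
  have e : (⟨i, lt_of_lt_of_le h (Nat.lt_succ_iff.mp k.isLt)⟩ : Fin m) = j := Fin.ext (by simp [hj])
  rw [e, Fin.val_succ]

lemma insertAt_val_gt (k : Fin (m+1)) (σ : Equiv.Perm (Fin m)) (i : Fin (m+1)) (j : Fin m)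
    (h : (k : ℕ) < (i : ℕ)) (hj : (j : ℕ) = (i : ℕ) - 1) :
    ((insertAt k σ i : Fin (m+1)) : ℕ) = (σ j : ℕ) + 1 := by
  rw [insertAt_gt k σ i h]
  have e : (⟨(i : ℕ) - 1, by omega⟩ : Fin m) = j := Fin.ext (by simp [hj])
  rw [e, Fin.val_succ]

lemma PsiMap_insertAt (p : Fin (m+1)) (σ : Equiv.Perm (Fin m)) :
    PsiMap (insertAt p σ) = insertAt p.rev (rcPerm σ) := by
  ext i
  have hi : (i : ℕ) < m + 1 := i.isLt
  have hp : (p : ℕ) < m + 1 := p.isLt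
  have hrev : (i.rev : ℕ) = m - (i : ℕ) := by rw [Fin.val_rev]; omega
  have hprev : (p.rev : ℕ) = m - (p : ℕ) := by rw [Fin.val_rev]; omega
  rw [PsiMap_val]
  rcases lt_trichotomy ((i.rev : ℕ)) ((p : ℕ)) with h | h | h
  · -- i.rev < p  ⇒  p.rev < i
    have h2 : (p.rev : ℕ) < (i : ℕ) := by omega
    have h3 : 1 ≤ (i : ℕ) := by omega
    have hm1 : 1 ≤ m := by omega
    obtain ⟨j, hjv⟩ : ∃ j : Fin m, (j : ℕ) = m - (i : ℕ) :=
      ⟨⟨m - (i : ℕ), by omega⟩, rfl⟩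
    have hjlt : (j : ℕ) < m := j.isLt
    simp only [insertAt_val_lt p σ i.rev j h (by omega),
      insertAt_val_gt p.rev (rcPerm σ) i j.rev h2 (by rw [Fin.val_rev]; omega)]
    rw [rcPerm_apply, Fin.rev_rev, if_neg (by omega), Fin.val_rev]
    have hσ : (σ j : ℕ) < m := (σ j).isLt
    omega
  · -- i.rev = p
    have e1 : i.rev = p := Fin.ext h
    have e2 : i = p.rev := by rw [← e1, Fin.rev_rev]
    rw [e1, e2, insertAt_self, insertAt_self]
    simp
  · -- p < i.rev  ⇒  i < p.rev
    have h2 : (i : ℕ) < (p.rev : ℕ) := by omega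
    have hm1 : 1 ≤ m := by omega
    obtain ⟨j, hjv⟩ : ∃ j : Fin m, (j : ℕ) = m - (i : ℕ) - 1 :=
      ⟨⟨m - (i : ℕ) - 1, by omega⟩, rfl⟩
    have hjlt : (j : ℕ) < m := j.isLt
    simp only [insertAt_val_gt p σ i.rev j h (by omega),
      insertAt_val_lt p.rev (rcPerm σ) i j.rev h2 (by rw [Fin.val_rev]; omega)]
    rw [rcPerm_apply, Fin.rev_rev, if_neg (by omega), Fin.val_rev]
    have hσ : (σ j : ℕ) < m := (σ j).isLt
    omega

end Psi2

section Psi3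
variable {m : ℕ}

lemma PsiMap_mem (π : Equiv.Perm (Fin (m+1))) (p : Fin (m+1)) (h : π p = 0) :
    PsiMap π p.rev = 0 := by
  apply Fin.ext
  rw [PsiMap_val, Fin.rev_rev, h]
  simp

noncomputable def PsiInv {m : ℕ} (π : Equiv.Perm (Fin (m+1))) : Equiv.Perm (Fin (m+1)) :=
  rcPerm (π.trans (finRotate (m+1)).symm)

lemma finRotate_symm_add_one (x : Fin (m+1)) : (finRotate (m+1)).symm (x + 1) = x := by
  rw [← finRotate_succ_apply, Equiv.symm_apply_apply]

lemma PsiMap_PsiInv (π : Equiv.Perm (Fin (m+1))) : PsiMap (PsiInv π) = π := by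
  rw [PsiMap, PsiInv, rcPerm_rcPerm]
  ext i
  simp

lemma PsiInv_PsiMap (π : Equiv.Perm (Fin (m+1))) : PsiInv (PsiMap π) = π := by
  rw [PsiInv, PsiMap]
  have h1 : ((rcPerm π).trans (finRotate (m+1))).trans (finRotate (m+1)).symm = rcPerm π := by
    ext i
    simp [finRotate_symm_add_one]
  rw [h1, rcPerm_rcPerm]

lemma PsiInv_mem (π : Equiv.Perm (Fin (m+1))) (p : Fin (m+1)) (h : π p.rev = 0) :
    PsiInv π p = 0 := by
  have h1 : PsiInv π p = ((finRotate (m+1)).symm (π p.rev)).rev := rfl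
  rw [h1, h]
  have h2 : (finRotate (m+1)).symm 0 = Fin.last m := by
    apply (finRotate (m+1)).injective
    simp [finRotate_succ_apply, Fin.last_add_one]
  rw [h2]
  apply Fin.ext
  simp [Fin.val_rev]

end Psi3

section CrsLemma
variable {m : ℕ}

lemma perm_zero_iff (π : Equiv.Perm (Fin (m+1))) (p : Fin (m+1)) (hp : π p = 0) :
    ∀ b : Fin (m+1), ((π b : ℕ) = 0) ↔ (b : ℕ) = (p : ℕ) := by
  intro b
  constructor
  · intro h
    have h2 : π b = π p := by
      rw [hp]
      exact Fin.ext h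
    exact congrArg Fin.val (π.injective h2)
  · intro h
    rw [show b = p from Fin.ext h, hp]
    rfl

lemma count_balance (π : Equiv.Perm (Fin (m+1))) (p : Fin (m+1)) (hp : π p = 0) :
    (Finset.univ.filter (fun b : Fin (m+1) =>
        (p:ℕ) < (b:ℕ) ∧ 0 < (π b:ℕ) ∧ (π b:ℕ) ≤ (p:ℕ))).card
    = (Finset.univ.filter (fun a : Fin (m+1) =>
        (a:ℕ) < (p:ℕ) ∧ (p:ℕ) < (π a:ℕ))).card := by
  classical
  have hzero := perm_zero_iff π p hp
  have h1 : (Finset.univ.filter (fun x : Fin (m+1) =>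
      0 < (π x:ℕ) ∧ (π x:ℕ) ≤ (p:ℕ))).card = (p:ℕ) := by
    have e1 : (Finset.univ.filter (fun x : Fin (m+1) =>
        0 < (π x:ℕ) ∧ (π x:ℕ) ≤ (p:ℕ))).card
        = (Finset.univ.filter (fun v : Fin (m+1) =>
        0 < (v:ℕ) ∧ (v:ℕ) ≤ (p:ℕ))).card := by
      apply Finset.card_equiv π
      intro x
      simp only [Finset.mem_filter, Finset.mem_univ, true_and]
    have e2 : (Finset.univ.filter (fun v : Fin (m+1) =>
        0 < (v:ℕ) ∧ (v:ℕ) ≤ (p:ℕ))) = Finset.Ioc 0 p := by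
      ext v
      simp only [Finset.mem_filter, Finset.mem_univ, true_and, Finset.mem_Ioc,
        Fin.lt_def, Fin.le_def, Fin.val_zero]
    rw [e1, e2, Fin.card_Ioc]
    simp
  have h2 : (Finset.univ.filter (fun x : Fin (m+1) => (x:ℕ) < (p:ℕ))).card = (p:ℕ) := by
    have e2 : (Finset.univ.filter (fun x : Fin (m+1) => (x:ℕ) < (p:ℕ))) = Finset.Iio p := by
      ext v
      simp only [Finset.mem_filter, Finset.mem_univ, true_and, Finset.mem_Iio, Fin.lt_def]
    rw [e2, Fin.card_Iio]
  have split1 : (Finset.univ.filter (fun x : Fin (m+1) =>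
      0 < (π x:ℕ) ∧ (π x:ℕ) ≤ (p:ℕ)))
      = (Finset.univ.filter (fun x : Fin (m+1) =>
          (x:ℕ) < (p:ℕ) ∧ 0 < (π x:ℕ) ∧ (π x:ℕ) ≤ (p:ℕ)))
        ∪ (Finset.univ.filter (fun b : Fin (m+1) =>
          (p:ℕ) < (b:ℕ) ∧ 0 < (π b:ℕ) ∧ (π b:ℕ) ≤ (p:ℕ))) := by
    ext x
    simp only [Finset.mem_filter, Finset.mem_union, Finset.mem_univ, true_and]
    have := hzero x
    omega
  have split2 : (Finset.univ.filter (fun x : Fin (m+1) => (x:ℕ) < (p:ℕ)))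
      = (Finset.univ.filter (fun x : Fin (m+1) =>
          (x:ℕ) < (p:ℕ) ∧ 0 < (π x:ℕ) ∧ (π x:ℕ) ≤ (p:ℕ)))
        ∪ (Finset.univ.filter (fun a : Fin (m+1) =>
          (a:ℕ) < (p:ℕ) ∧ (p:ℕ) < (π a:ℕ))) := by
    ext x
    simp only [Finset.mem_filter, Finset.mem_union, Finset.mem_univ, true_and]
    have := hzero x
    omega
  have d1 : Disjoint (Finset.univ.filter (fun x : Fin (m+1) =>
        (x:ℕ) < (p:ℕ) ∧ 0 < (π x:ℕ) ∧ (π x:ℕ) ≤ (p:ℕ)))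
      (Finset.univ.filter (fun b : Fin (m+1) =>
        (p:ℕ) < (b:ℕ) ∧ 0 < (π b:ℕ) ∧ (π b:ℕ) ≤ (p:ℕ))) := by
    rw [Finset.disjoint_left]
    intro x hx hy
    simp only [Finset.mem_filter, Finset.mem_univ, true_and] at hx hy
    omega
  have d2 : Disjoint (Finset.univ.filter (fun x : Fin (m+1) =>
        (x:ℕ) < (p:ℕ) ∧ 0 < (π x:ℕ) ∧ (π x:ℕ) ≤ (p:ℕ)))
      (Finset.univ.filter (fun a : Fin (m+1) =>
        (a:ℕ) < (p:ℕ) ∧ (p:ℕ) < (π a:ℕ))) := by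
    rw [Finset.disjoint_left]
    intro x hx hy
    simp only [Finset.mem_filter, Finset.mem_univ, true_and] at hx hy
    omega
  have c1 := h1
  rw [split1, Finset.card_union_of_disjoint d1] at c1
  have c2 := h2
  rw [split2, Finset.card_union_of_disjoint d2] at c2
  omega

end CrsLemma

section CrsMain
variable {m : ℕ}

lemma crs_PsiMap (π : Equiv.Perm (Fin (m+1))) (p : Fin (m+1)) (hp : π p = 0) :
    crs (PsiMap π) = crs π := by
  classical
  have hzero := perm_zero_iff π p hp
  have hval : ∀ b : Fin (m+1),
      ((PsiMap π) b.rev : ℕ) = if (π b : ℕ) = 0 then 0 else m + 1 - (π b : ℕ) := by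
    intro b
    rw [PsiMap_val, Fin.rev_rev]
  have hinj : ∀ a b : Fin (m+1), ((π a : ℕ) = (π b : ℕ)) ↔ (a : ℕ) = (b : ℕ) := by
    intro a b
    constructor
    · intro h
      exact congrArg Fin.val (π.injective (Fin.ext h))
    · intro h
      rw [show a = b from Fin.ext h]
  -- the pointwise correspondence
  have step : ∀ a b : Fin (m+1),
      ((b.rev < a.rev ∧ a.rev < (PsiMap π) b.rev ∧ (PsiMap π) b.rev < (PsiMap π) a.rev) ∨
       ((PsiMap π) b.rev < (PsiMap π) a.rev ∧ (PsiMap π) a.rev ≤ b.rev ∧ b.rev < a.rev))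
      ↔ ((((a < b ∧ b < π a ∧ π a < π b) ∨ (π a < π b ∧ π b ≤ a ∧ a < b)) ∧
          ¬ ((a:ℕ) = (p:ℕ) ∧ (p:ℕ) < (b:ℕ) ∧ 0 < (π b:ℕ) ∧ (π b:ℕ) ≤ (p:ℕ))) ∨
         ((b:ℕ) = (p:ℕ) ∧ (a:ℕ) < (p:ℕ) ∧ (p:ℕ) < (π a:ℕ))) := by
    intro a b
    have hva := hval a
    have hvb := hval b
    have hza := hzero a
    have hzb := hzero b
    have hab := hinj a b
    have h1 := a.isLt
    have h2 := b.isLt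
    have h3 := (π a).isLt
    have h4 := (π b).isLt
    have h5 := p.isLt
    simp only [Fin.lt_def, Fin.le_def, Fin.val_rev]
    by_cases e1 : (π a : ℕ) = 0 <;> by_cases e2 : (π b : ℕ) = 0
    · rw [if_pos e1] at hva; rw [if_pos e2] at hvb; omega
    · rw [if_pos e1] at hva; rw [if_neg e2] at hvb; omega
    · rw [if_neg e1] at hva; rw [if_pos e2] at hvb; omega
    · rw [if_neg e1] at hva; rw [if_neg e2] at hvb; omega
  -- step A : reflect the pairs
  have stepA : crs (PsiMap π) =
      (Finset.univ.filter (fun q : Fin (m+1) × Fin (m+1) =>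
        (((q.1 < q.2 ∧ q.2 < π q.1 ∧ π q.1 < π q.2) ∨
          (π q.1 < π q.2 ∧ π q.2 ≤ q.1 ∧ q.1 < q.2)) ∧
          ¬ ((q.1:ℕ) = (p:ℕ) ∧ (p:ℕ) < (q.2:ℕ) ∧ 0 < (π q.2:ℕ) ∧ (π q.2:ℕ) ≤ (p:ℕ))) ∨
        ((q.2:ℕ) = (p:ℕ) ∧ (q.1:ℕ) < (p:ℕ) ∧ (p:ℕ) < (π q.1:ℕ)))).card := by
    unfold crs
    apply Finset.card_nbij' (fun q : Fin (m+1) × Fin (m+1) => (q.2.rev, q.1.rev))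
      (fun q : Fin (m+1) × Fin (m+1) => (q.2.rev, q.1.rev))
    · intro q hq
      simp only [Finset.mem_coe, Finset.mem_filter, Finset.mem_univ, true_and] at hq ⊢
      have h := step q.2.rev q.1.rev
      simp only [Fin.rev_rev] at h
      exact h.mp hq
    · intro q hq
      simp only [Finset.mem_coe, Finset.mem_filter, Finset.mem_univ, true_and] at hq ⊢
      exact (step q.1 q.2).mpr hq
    · intro q _
      simp [Fin.rev_rev]
    · intro q _
      simp [Fin.rev_rev]
  rw [stepA]
  unfold crs
  -- split up the right-hand side
  have hBad : ∀ q : Fin (m+1) × Fin (m+1),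
      ((q.1:ℕ) = (p:ℕ) ∧ (p:ℕ) < (q.2:ℕ) ∧ 0 < (π q.2:ℕ) ∧ (π q.2:ℕ) ≤ (p:ℕ)) →
      ((q.1 < q.2 ∧ q.2 < π q.1 ∧ π q.1 < π q.2) ∨
       (π q.1 < π q.2 ∧ π q.2 ≤ q.1 ∧ q.1 < q.2)) := by
    intro q h
    have hza := hzero q.1
    simp only [Fin.lt_def, Fin.le_def]
    omega
  have hExtra : ∀ q : Fin (m+1) × Fin (m+1),
      ((q.2:ℕ) = (p:ℕ) ∧ (q.1:ℕ) < (p:ℕ) ∧ (p:ℕ) < (π q.1:ℕ)) →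
      ¬ ((q.1 < q.2 ∧ q.2 < π q.1 ∧ π q.1 < π q.2) ∨
       (π q.1 < π q.2 ∧ π q.2 ≤ q.1 ∧ q.1 < q.2)) := by
    intro q h
    have hzb := hzero q.2
    simp only [Fin.lt_def, Fin.le_def]
    omega
  have hsplit : (Finset.univ.filter (fun q : Fin (m+1) × Fin (m+1) =>
        (((q.1 < q.2 ∧ q.2 < π q.1 ∧ π q.1 < π q.2) ∨
          (π q.1 < π q.2 ∧ π q.2 ≤ q.1 ∧ q.1 < q.2)) ∧
          ¬ ((q.1:ℕ) = (p:ℕ) ∧ (p:ℕ) < (q.2:ℕ) ∧ 0 < (π q.2:ℕ) ∧ (π q.2:ℕ) ≤ (p:ℕ))) ∨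
        ((q.2:ℕ) = (p:ℕ) ∧ (q.1:ℕ) < (p:ℕ) ∧ (p:ℕ) < (π q.1:ℕ))))
      = (Finset.univ.filter (fun q : Fin (m+1) × Fin (m+1) =>
          ((q.1 < q.2 ∧ q.2 < π q.1 ∧ π q.1 < π q.2) ∨
          (π q.1 < π q.2 ∧ π q.2 ≤ q.1 ∧ q.1 < q.2)) ∧
          ¬ ((q.1:ℕ) = (p:ℕ) ∧ (p:ℕ) < (q.2:ℕ) ∧ 0 < (π q.2:ℕ) ∧ (π q.2:ℕ) ≤ (p:ℕ))))
        ∪ (Finset.univ.filter (fun q : Fin (m+1) × Fin (m+1) =>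
          (q.2:ℕ) = (p:ℕ) ∧ (q.1:ℕ) < (p:ℕ) ∧ (p:ℕ) < (π q.1:ℕ))) :=
    Finset.filter_or _ _ _
  have hdisj : Disjoint (Finset.univ.filter (fun q : Fin (m+1) × Fin (m+1) =>
          ((q.1 < q.2 ∧ q.2 < π q.1 ∧ π q.1 < π q.2) ∨
          (π q.1 < π q.2 ∧ π q.2 ≤ q.1 ∧ q.1 < q.2)) ∧
          ¬ ((q.1:ℕ) = (p:ℕ) ∧ (p:ℕ) < (q.2:ℕ) ∧ 0 < (π q.2:ℕ) ∧ (π q.2:ℕ) ≤ (p:ℕ))))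
      (Finset.univ.filter (fun q : Fin (m+1) × Fin (m+1) =>
          (q.2:ℕ) = (p:ℕ) ∧ (q.1:ℕ) < (p:ℕ) ∧ (p:ℕ) < (π q.1:ℕ))) := by
    rw [Finset.disjoint_left]
    intro q hq1 hq2
    simp only [Finset.mem_filter, Finset.mem_univ, true_and] at hq1 hq2
    exact hExtra q hq2 hq1.1
  rw [hsplit, Finset.card_union_of_disjoint hdisj]
  -- count the removed and added pairs
  have hcc := Finset.card_filter_add_card_filter_not
    (s := Finset.univ.filter (fun q : Fin (m+1) × Fin (m+1) =>
          (q.1 < q.2 ∧ q.2 < π q.1 ∧ π q.1 < π q.2) ∨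
          (π q.1 < π q.2 ∧ π q.2 ≤ q.1 ∧ q.1 < q.2)))
    (p := fun q : Fin (m+1) × Fin (m+1) =>
          ((q.1:ℕ) = (p:ℕ) ∧ (p:ℕ) < (q.2:ℕ) ∧ 0 < (π q.2:ℕ) ∧ (π q.2:ℕ) ≤ (p:ℕ)))
  rw [Finset.filter_filter, Finset.filter_filter] at hcc
  have hBadEq : (Finset.univ.filter (fun q : Fin (m+1) × Fin (m+1) =>
        ((q.1 < q.2 ∧ q.2 < π q.1 ∧ π q.1 < π q.2) ∨
          (π q.1 < π q.2 ∧ π q.2 ≤ q.1 ∧ q.1 < q.2)) ∧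
        ((q.1:ℕ) = (p:ℕ) ∧ (p:ℕ) < (q.2:ℕ) ∧ 0 < (π q.2:ℕ) ∧ (π q.2:ℕ) ≤ (p:ℕ))))
      = (Finset.univ.filter (fun q : Fin (m+1) × Fin (m+1) =>
        (q.1:ℕ) = (p:ℕ) ∧ (p:ℕ) < (q.2:ℕ) ∧ 0 < (π q.2:ℕ) ∧ (π q.2:ℕ) ≤ (p:ℕ))) := by
    ext q
    simp only [Finset.mem_filter, Finset.mem_univ, true_and]
    constructor
    · exact fun h => h.2
    · exact fun h => ⟨hBad q h, h⟩
  rw [hBadEq] at hcc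
  -- Bad pairs count
  have hBadCard : (Finset.univ.filter (fun q : Fin (m+1) × Fin (m+1) =>
        (q.1:ℕ) = (p:ℕ) ∧ (p:ℕ) < (q.2:ℕ) ∧ 0 < (π q.2:ℕ) ∧ (π q.2:ℕ) ≤ (p:ℕ))).card
      = (Finset.univ.filter (fun b : Fin (m+1) =>
        (p:ℕ) < (b:ℕ) ∧ 0 < (π b:ℕ) ∧ (π b:ℕ) ≤ (p:ℕ))).card := by
    apply Finset.card_nbij' (fun q : Fin (m+1) × Fin (m+1) => q.2) (fun b => (p, b))
    · intro q hq
      simp only [Finset.mem_coe, Finset.mem_filter, Finset.mem_univ, true_and] at hq ⊢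
      exact hq.2
    · intro b hb
      simp only [Finset.mem_coe, Finset.mem_filter, Finset.mem_univ, true_and] at hb ⊢
      exact hb
    · intro q hq
      simp only [Finset.mem_coe, Finset.mem_filter, Finset.mem_univ, true_and] at hq
      have : (p : Fin (m+1)) = q.1 := Fin.ext hq.1.symm
      rw [this]
    · intro b _
      rfl
  have hExtraCard : (Finset.univ.filter (fun q : Fin (m+1) × Fin (m+1) =>
        (q.2:ℕ) = (p:ℕ) ∧ (q.1:ℕ) < (p:ℕ) ∧ (p:ℕ) < (π q.1:ℕ))).card
      = (Finset.univ.filter (fun a : Fin (m+1) =>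
        (a:ℕ) < (p:ℕ) ∧ (p:ℕ) < (π a:ℕ))).card := by
    apply Finset.card_nbij' (fun q : Fin (m+1) × Fin (m+1) => q.1) (fun a => (a, p))
    · intro q hq
      simp only [Finset.mem_coe, Finset.mem_filter, Finset.mem_univ, true_and] at hq ⊢
      exact hq.2
    · intro a ha
      simp only [Finset.mem_coe, Finset.mem_filter, Finset.mem_univ, true_and] at ha ⊢
      exact ha
    · intro q hq
      simp only [Finset.mem_coe, Finset.mem_filter, Finset.mem_univ, true_and] at hq
      have : (p : Fin (m+1)) = q.2 := Fin.ext hq.1.symm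
      rw [this]
    · intro a _
      rfl
  have hbal := count_balance π p hp
  omega

end CrsMain


lemma PsiMap_mem_iff {m : ℕ} (π : Equiv.Perm (Fin (m+1))) (p : Fin (m+1)) :
    PsiMap π p.rev = 0 ↔ π p = 0 := by
  constructor
  · intro h
    have h5 := PsiInv_mem (PsiMap π) p h
    rwa [PsiInv_PsiMap] at h5
  · exact PsiMap_mem π p

theorem Psi_bijection (m k : ℕ) (hk : 1 ≤ k) (hkm : k ≤ m + 1) :
    ∃ Ψ : Equiv.Perm (Fin (m + 1)) → Equiv.Perm (Fin (m + 1)),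
      (∀ σ : Equiv.Perm (Fin m),
        Ψ (insertAt ⟨k - 1, by omega⟩ σ) = insertAt ⟨m + 1 - k, by omega⟩ (rcPerm σ)) ∧
      Set.BijOn Ψ {π | π ⟨k - 1, by omega⟩ = 0} {π | π ⟨m + 1 - k, by omega⟩ = 0} ∧
      (∀ π : Equiv.Perm (Fin (m + 1)), π ⟨k - 1, by omega⟩ = 0 → crs (Ψ π) = crs π) ∧
      Fpoly (m + 1) (fun π => π ⟨k - 1, by omega⟩ = 0) =
        Fpoly (m + 1) (fun π => π ⟨m + 1 - k, by omega⟩ = 0) := by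
  classical
  have hrev : (⟨k - 1, by omega⟩ : Fin (m+1)).rev = ⟨m + 1 - k, by omega⟩ := by
    apply Fin.ext
    simp only [Fin.val_rev]
    omega
  refine ⟨PsiMap, ?_, ⟨?_, ?_, ?_⟩, ?_, ?_⟩
  · intro σ
    rw [PsiMap_insertAt, hrev]
  · -- MapsTo
    intro π hπ
    simp only [Set.mem_setOf_eq] at hπ ⊢
    have h := PsiMap_mem π ⟨k - 1, by omega⟩ hπ
    rwa [hrev] at h
  · -- InjOn
    intro a _ b _ h
    rw [← PsiInv_PsiMap a, h, PsiInv_PsiMap]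
  · -- SurjOn
    intro π' hπ'
    simp only [Set.mem_setOf_eq] at hπ'
    refine ⟨PsiInv π', ?_, PsiMap_PsiInv π'⟩
    simp only [Set.mem_setOf_eq]
    apply PsiInv_mem
    rwa [hrev]
  · -- crs preservation
    intro π hπ
    exact crs_PsiMap π ⟨k - 1, by omega⟩ hπ
  · -- Fpoly
    rw [Fpoly, Fpoly]
    apply Fintype.sum_equiv ⟨PsiMap, PsiInv, PsiInv_PsiMap, PsiMap_PsiInv⟩
    intro π
    simp only [Equiv.coe_fn_mk]
    by_cases h : π ⟨k - 1, by omega⟩ = 0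
    · have h2 := PsiMap_mem π ⟨k - 1, by omega⟩ h
      rw [hrev] at h2
      rw [if_pos h, if_pos h2, crs_PsiMap π ⟨k - 1, by omega⟩ h]
    · have h2 : ¬ (PsiMap π ⟨m + 1 - k, by omega⟩ = 0) := fun h3 =>
        h ((PsiMap_mem_iff π ⟨k - 1, by omega⟩).mp (by rw [hrev]; exact h3))
      rw [if_neg h, if_neg h2]
end

section
/- For all integers n ≥ 1 and r ≥ 0, the number of permutations of [2n] having exactly r crossings is even. -/
open scoped Classical

private lemma even_card_of_invol {α : Type*} [DecidableEq α] (f : α → α) :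
    ∀ (k : ℕ) (s : Finset α), s.card ≤ k → (∀ a ∈ s, f a ∈ s) → (∀ a ∈ s, f (f a) = a) →
    (∀ a ∈ s, f a ≠ a) → Even s.card := by
  intro k
  induction k with
  | zero => intro s hs _ _ _; have : s.card = 0 := Nat.le_zero.mp hs; simp [this]
  | succ k ih =>
    intro s hs hmem hinv hne
    rcases s.eq_empty_or_nonempty with rfl | ⟨a, ha⟩
    · simp
    · set t := (s.erase a).erase (f a) with ht
      have hfa : f a ∈ s := hmem a ha
      have hfa' : f a ≠ a := hne a ha
      have h1 : f a ∈ s.erase a := Finset.mem_erase.mpr ⟨hfa', hfa⟩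
      have e1 : (s.erase a).card = s.card - 1 := Finset.card_erase_of_mem ha
      have e2 : t.card = (s.erase a).card - 1 := Finset.card_erase_of_mem h1
      have l1 : 1 ≤ (s.erase a).card := Finset.card_pos.mpr ⟨f a, h1⟩
      have l2 : 1 ≤ s.card := Finset.card_pos.mpr ⟨a, ha⟩
      have hcard : s.card = t.card + 2 := by omega
      have hts : ∀ x ∈ t, x ∈ s := fun x hx =>
        Finset.mem_of_mem_erase (Finset.mem_of_mem_erase hx)
      have hmem' : ∀ x ∈ t, f x ∈ t := by
        intro x hx
        have hxs := hts x hx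
        have hx1 : x ≠ f a := (Finset.mem_erase.mp hx).1
        have hx2 : x ≠ a := (Finset.mem_erase.mp (Finset.mem_of_mem_erase hx)).1
        refine Finset.mem_erase.mpr ⟨?_, Finset.mem_erase.mpr ⟨?_, hmem x hxs⟩⟩
        · intro h
          apply hx2
          have := hinv x hxs
          rw [h, hinv a ha] at this
          exact this.symm ▸ rfl
        · intro h
          apply hx1
          have := hinv x hxs
          rw [h] at this
          exact this.symm ▸ rfl
      have hev := ih t (by omega) hmem' (fun x hx => hinv x (hts x hx))
        (fun x hx => hne x (hts x hx))
      rw [hcard]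
      rcases hev with ⟨c, hc⟩
      exact ⟨c + 1, by omega⟩

section main
variable {m : ℕ} [NeZero m]

private def Fmap (σ : Equiv.Perm (Fin m)) : Equiv.Perm (Fin m) :=
  Fin.revPerm.trans (σ.trans (Equiv.neg (Fin m)))

private lemma Fmap_apply (σ : Equiv.Perm (Fin m)) (x : Fin m) :
    Fmap σ x = -(σ (Fin.rev x)) := rfl

private lemma Fmap_invol (σ : Equiv.Perm (Fin m)) : Fmap (Fmap σ) = σ := by
  ext x
  simp [Fmap_apply, Fin.rev_rev]

private lemma neg_val_of_ne {x : Fin m} (hx : x ≠ 0) : ((-x : Fin m)).val = m - x.val := by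
  have hm : 0 < m := Nat.pos_of_ne_zero (NeZero.ne m)
  have hx' : x.val ≠ 0 := fun h => hx (Fin.ext (by simp [h]))
  have hlt := x.isLt
  rw [Fin.neg_def]
  exact Nat.mod_eq_of_lt (by omega)

private lemma crs_Fmap (σ : Equiv.Perm (Fin m)) : crs (Fmap σ) = crs σ := by
  have hm : 0 < m := Nat.pos_of_ne_zero (NeZero.ne m)
  set τ := Fmap σ with hτdef
  have hτ : ∀ x : Fin m, τ (Fin.rev x) = -(σ x) := by
    intro x; rw [Fmap_apply, Fin.rev_rev]
  -- val facts
  have hvz : ((0 : Fin m)).val = 0 := rfl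
  have hzeroiff : ∀ x : Fin m, x = 0 ↔ x.val = 0 := by
    intro x; constructor
    · intro h; rw [h]; exact hvz
    · intro h; exact Fin.ext (by simp [h, hvz])
  have hnegval : ∀ x : Fin m, (x = 0 ∧ ((-x : Fin m)).val = 0) ∨
      (x.val ≠ 0 ∧ ((-x : Fin m)).val = m - x.val) := by
    intro x
    rcases eq_or_ne x 0 with h | h
    · left; exact ⟨h, by rw [h, neg_zero]; exact hvz⟩
    · right; exact ⟨fun hh => h ((hzeroiff x).mpr hh), neg_val_of_ne h⟩
  -- the key pointwise iff
  have key : ∀ a b : Fin m,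
      ((Fin.rev b < Fin.rev a ∧ Fin.rev a < τ (Fin.rev b) ∧ τ (Fin.rev b) < τ (Fin.rev a)) ∨
       (τ (Fin.rev b) < τ (Fin.rev a) ∧ τ (Fin.rev a) ≤ Fin.rev b ∧ Fin.rev b < Fin.rev a))
      ↔ ((a < b ∧ b < σ a ∧ σ a < σ b) ∨
         ((σ a < σ b ∧ σ b ≤ a ∧ a < b) ∧ σ a ≠ 0) ∨
         (a < b ∧ σ b = 0 ∧ b < σ a)) := by
    intro a b
    rw [hτ a, hτ b]
    have hra := Fin.val_rev a
    have hrb := Fin.val_rev b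
    have ha := a.isLt
    have hb := b.isLt
    have hsa := (σ a).isLt
    have hsb := (σ b).isLt
    have hna := hnegval (σ a)
    have hnb := hnegval (σ b)
    simp only [Fin.lt_def, Fin.le_def, hzeroiff, Ne]
    rcases hna with ⟨h1, h2⟩ | ⟨h1, h2⟩ <;> rcases hnb with ⟨g1, g2⟩ | ⟨g1, g2⟩ <;>
      [skip; skip; skip; skip] <;>
      first
      | (rw [h2, g2]; rw [(hzeroiff _).mp h1] at *; omega)
      | (rw [h2, g2]; omega)
      | omega
  -- predicates
  set p0 : Fin m := σ.symm 0 with hp0def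
  have hp0 : σ p0 = 0 := σ.apply_symm_apply 0
  have hinj : ∀ x : Fin m, σ x = 0 → x = p0 := by
    intro x hx
    apply σ.injective
    rw [hx, hp0]
  -- step 1 : crs τ as card of filter R
  have step1 : crs τ = (Finset.univ.filter (fun p : Fin m × Fin m =>
      (p.1 < p.2 ∧ p.2 < σ p.1 ∧ σ p.1 < σ p.2) ∨
      ((σ p.1 < σ p.2 ∧ σ p.2 ≤ p.1 ∧ p.1 < p.2) ∧ σ p.1 ≠ 0) ∨
      (p.1 < p.2 ∧ σ p.2 = 0 ∧ p.2 < σ p.1))).card := by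
    unfold crs
    apply Finset.card_nbij' (i := fun p : Fin m × Fin m => (Fin.rev p.2, Fin.rev p.1))
      (j := fun p : Fin m × Fin m => (Fin.rev p.2, Fin.rev p.1))
    · intro p hp
      simp only [Finset.mem_coe, Finset.mem_filter, Finset.mem_univ, true_and] at hp ⊢
      exact (key (Fin.rev p.2) (Fin.rev p.1)).mp (by rwa [Fin.rev_rev, Fin.rev_rev])
    · intro p hp
      simp only [Finset.mem_coe, Finset.mem_filter, Finset.mem_univ, true_and] at hp ⊢
      have := (key p.1 p.2).mpr hp
      exact this
    · intro p _; simp [Fin.rev_rev]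
    · intro p _; simp [Fin.rev_rev]
  -- step 2 : crs σ with the split of the second disjunct
  have step2 : crs σ = (Finset.univ.filter (fun p : Fin m × Fin m =>
      (p.1 < p.2 ∧ p.2 < σ p.1 ∧ σ p.1 < σ p.2) ∨
      ((σ p.1 < σ p.2 ∧ σ p.2 ≤ p.1 ∧ p.1 < p.2) ∧ σ p.1 ≠ 0) ∨
      ((σ p.1 < σ p.2 ∧ σ p.2 ≤ p.1 ∧ p.1 < p.2) ∧ σ p.1 = 0))).card := by
    unfold crs
    congr 1
    apply Finset.filter_congr
    intro p _
    constructor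
    · rintro (h | h)
      · exact Or.inl h
      · rcases eq_or_ne (σ p.1) 0 with h0 | h0
        · exact Or.inr (Or.inr ⟨h, h0⟩)
        · exact Or.inr (Or.inl ⟨h, h0⟩)
    · rintro (h | ⟨h, _⟩ | ⟨h, _⟩)
      · exact Or.inl h
      · exact Or.inr h
      · exact Or.inr h
  rw [step1, step2]
  have d1 : ∀ p : Fin m × Fin m, (p.1 < p.2 ∧ p.2 < σ p.1 ∧ σ p.1 < σ p.2) →
      ¬ ((σ p.1 < σ p.2 ∧ σ p.2 ≤ p.1 ∧ p.1 < p.2) ∧ σ p.1 ≠ 0) := by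
    rintro p ⟨hh1, h2, h3⟩ ⟨⟨g1, g2, _⟩, _⟩
    exact absurd (((h3.trans_le g2).trans hh1).trans h2) (lt_irrefl _)
  have d2 : ∀ p : Fin m × Fin m, (p.1 < p.2 ∧ p.2 < σ p.1 ∧ σ p.1 < σ p.2) →
      ¬ (p.1 < p.2 ∧ σ p.2 = 0 ∧ p.2 < σ p.1) := by
    rintro p ⟨_, h2, h3⟩ ⟨g1, g2, g3⟩
    rw [g2] at h3
    have : (σ p.1).val < (0 : Fin m).val := Fin.lt_def.mp h3
    simp at this
  have d3 : ∀ p : Fin m × Fin m, ((σ p.1 < σ p.2 ∧ σ p.2 ≤ p.1 ∧ p.1 < p.2) ∧ σ p.1 ≠ 0) →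
      ¬ (p.1 < p.2 ∧ σ p.2 = 0 ∧ p.2 < σ p.1) := by
    rintro p ⟨⟨h1, _, _⟩, _⟩ ⟨_, g2, _⟩
    rw [g2] at h1
    have : (σ p.1).val < (0 : Fin m).val := Fin.lt_def.mp h1
    simp at this
  have d4 : ∀ p : Fin m × Fin m, (p.1 < p.2 ∧ p.2 < σ p.1 ∧ σ p.1 < σ p.2) →
      ¬ ((σ p.1 < σ p.2 ∧ σ p.2 ≤ p.1 ∧ p.1 < p.2) ∧ σ p.1 = 0) := by
    rintro p ⟨hh1, h2, h3⟩ ⟨⟨g1, g2, _⟩, _⟩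
    exact absurd (((h3.trans_le g2).trans hh1).trans h2) (lt_irrefl _)
  have d5 : ∀ p : Fin m × Fin m, ((σ p.1 < σ p.2 ∧ σ p.2 ≤ p.1 ∧ p.1 < p.2) ∧ σ p.1 ≠ 0) →
      ¬ ((σ p.1 < σ p.2 ∧ σ p.2 ≤ p.1 ∧ p.1 < p.2) ∧ σ p.1 = 0) := by
    rintro p ⟨_, h0⟩ ⟨_, g0⟩
    exact h0 g0
  have e1 : (Finset.univ.filter (fun p : Fin m × Fin m =>
        (p.1 < p.2 ∧ p.2 < σ p.1 ∧ σ p.1 < σ p.2) ∨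
        ((σ p.1 < σ p.2 ∧ σ p.2 ≤ p.1 ∧ p.1 < p.2) ∧ σ p.1 ≠ 0) ∨
        (p.1 < p.2 ∧ σ p.2 = 0 ∧ p.2 < σ p.1))).card =
      (Finset.univ.filter (fun p : Fin m × Fin m =>
        p.1 < p.2 ∧ p.2 < σ p.1 ∧ σ p.1 < σ p.2)).card +
      (Finset.univ.filter (fun p : Fin m × Fin m =>
        (σ p.1 < σ p.2 ∧ σ p.2 ≤ p.1 ∧ p.1 < p.2) ∧ σ p.1 ≠ 0)).card +
      (Finset.univ.filter (fun p : Fin m × Fin m =>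
        p.1 < p.2 ∧ σ p.2 = 0 ∧ p.2 < σ p.1)).card := by
    rw [Finset.filter_or, Finset.filter_or, Finset.card_union_of_disjoint,
      Finset.card_union_of_disjoint, add_assoc]
    · rw [Finset.disjoint_left]
      intro p hp hq
      simp only [Finset.mem_filter] at hp hq
      exact d3 p hp.2 hq.2
    · rw [Finset.disjoint_left]
      intro p hp hq
      simp only [Finset.mem_filter, Finset.mem_union] at hp hq
      rcases hq with ⟨_, hq1⟩ | ⟨_, hq2⟩
      · exact d1 p hp.2 hq1
      · exact d2 p hp.2 hq2
  have e2 : (Finset.univ.filter (fun p : Fin m × Fin m =>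
        (p.1 < p.2 ∧ p.2 < σ p.1 ∧ σ p.1 < σ p.2) ∨
        ((σ p.1 < σ p.2 ∧ σ p.2 ≤ p.1 ∧ p.1 < p.2) ∧ σ p.1 ≠ 0) ∨
        ((σ p.1 < σ p.2 ∧ σ p.2 ≤ p.1 ∧ p.1 < p.2) ∧ σ p.1 = 0))).card =
      (Finset.univ.filter (fun p : Fin m × Fin m =>
        p.1 < p.2 ∧ p.2 < σ p.1 ∧ σ p.1 < σ p.2)).card +
      (Finset.univ.filter (fun p : Fin m × Fin m =>
        (σ p.1 < σ p.2 ∧ σ p.2 ≤ p.1 ∧ p.1 < p.2) ∧ σ p.1 ≠ 0)).card +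
      (Finset.univ.filter (fun p : Fin m × Fin m =>
        (σ p.1 < σ p.2 ∧ σ p.2 ≤ p.1 ∧ p.1 < p.2) ∧ σ p.1 = 0)).card := by
    rw [Finset.filter_or, Finset.filter_or, Finset.card_union_of_disjoint,
      Finset.card_union_of_disjoint, add_assoc]
    · rw [Finset.disjoint_left]
      intro p hp hq
      simp only [Finset.mem_filter] at hp hq
      exact d5 p hp.2 hq.2
    · rw [Finset.disjoint_left]
      intro p hp hq
      simp only [Finset.mem_filter, Finset.mem_union] at hp hq
      rcases hq with ⟨_, hq1⟩ | ⟨_, hq2⟩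
      · exact d1 p hp.2 hq1
      · exact d4 p hp.2 hq2
  rw [e1, e2]
  congr 1
  -- remaining: card R3 = card E2
  have hX : (Finset.univ.filter (fun p : Fin m × Fin m =>
      p.1 < p.2 ∧ σ p.2 = 0 ∧ p.2 < σ p.1)).card =
      (Finset.univ.filter (fun a : Fin m => a < p0 ∧ p0 < σ a)).card := by
    apply Finset.card_nbij' (i := fun p : Fin m × Fin m => p.1)
      (j := fun a : Fin m => (a, p0))
    · intro p hp
      simp only [Finset.mem_coe, Finset.mem_filter, Finset.mem_univ, true_and] at hp ⊢
      obtain ⟨h1, h2, h3⟩ := hp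
      have := hinj _ h2
      rw [this] at h1 h3
      exact ⟨h1, h3⟩
    · intro a ha
      simp only [Finset.mem_coe, Finset.mem_filter, Finset.mem_univ, true_and] at ha ⊢
      exact ⟨ha.1, hp0, ha.2⟩
    · intro p hp
      simp only [Finset.mem_coe, Finset.mem_filter, Finset.mem_univ, true_and] at hp
      have := hinj _ hp.2.1
      simp [← this]
    · intro a _; rfl
  have hE : (Finset.univ.filter (fun p : Fin m × Fin m =>
      (σ p.1 < σ p.2 ∧ σ p.2 ≤ p.1 ∧ p.1 < p.2) ∧ σ p.1 = 0)).card =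
      (Finset.univ.filter (fun b : Fin m => σ b ≤ p0 ∧ ¬ b ≤ p0)).card := by
    apply Finset.card_nbij' (i := fun p : Fin m × Fin m => p.2)
      (j := fun b : Fin m => (p0, b))
    · intro p hp
      simp only [Finset.mem_coe, Finset.mem_filter, Finset.mem_univ, true_and] at hp ⊢
      obtain ⟨⟨h1, h2, h3⟩, h0⟩ := hp
      have := hinj _ h0
      rw [this] at h2 h3
      exact ⟨h2, not_le.mpr h3⟩
    · intro b hb
      simp only [Finset.mem_coe, Finset.mem_filter, Finset.mem_univ, true_and] at hb ⊢
      obtain ⟨h1, h2⟩ := hb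
      have hbp : b ≠ p0 := fun h => h2 (h ▸ le_refl p0)
      have hσb : σ b ≠ 0 := fun h => hbp (hinj _ h)
      refine ⟨⟨?_, h1, not_le.mp h2⟩, hp0⟩
      rw [hp0]
      rw [Fin.lt_def]
      have : (σ b).val ≠ 0 := fun h => hσb (Fin.ext (by simp [h, hvz]))
      omega
    · intro p hp
      simp only [Finset.mem_coe, Finset.mem_filter, Finset.mem_univ, true_and] at hp
      have := hinj _ hp.2
      simp [← this]
    · intro b _; rfl
  rw [hX, hE]
  -- the final counting identity
  have hA : (Finset.univ.filter (fun a : Fin m => a < p0 ∧ p0 < σ a)) =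
      (Finset.univ.filter (fun x : Fin m => x ≤ p0 ∧ ¬ σ x ≤ p0)) := by
    ext x
    simp only [Finset.mem_filter, Finset.mem_univ, true_and]
    constructor
    · rintro ⟨h1, h2⟩; exact ⟨h1.le, not_le.mpr h2⟩
    · rintro ⟨h1, h2⟩
      rcases h1.lt_or_eq with hlt | rfl
      · exact ⟨hlt, not_le.mp h2⟩
      · exfalso; apply h2; rw [hp0]; exact Fin.le_def.mpr (by simp [hvz])
  rw [hA]
  have c1 : (Finset.univ.filter (fun x : Fin m => σ x ≤ p0)).card =
      (Finset.univ.filter (fun x : Fin m => x ≤ p0)).card := by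
    apply Finset.card_equiv σ
    intro i
    simp
  have c2 : (Finset.univ.filter (fun x : Fin m => x ≤ p0)).card = p0.val + 1 := by
    have : (Finset.univ.filter (fun x : Fin m => x ≤ p0)) = Finset.Iic p0 := by
      ext x; simp
    rw [this, Fin.card_Iic]
  have s1 := Finset.card_filter_add_card_filter_not
    (s := Finset.univ.filter (fun x : Fin m => σ x ≤ p0)) (p := fun x => x ≤ p0)
  have s2 := Finset.card_filter_add_card_filter_not
    (s := Finset.univ.filter (fun x : Fin m => x ≤ p0)) (p := fun x => σ x ≤ p0)
  rw [Finset.filter_filter, Finset.filter_filter] at s1 s2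
  have K : (Finset.univ.filter (fun x : Fin m => σ x ≤ p0 ∧ x ≤ p0)).card =
      (Finset.univ.filter (fun x : Fin m => x ≤ p0 ∧ σ x ≤ p0)).card := by
    congr 1
    ext x
    simp only [Finset.mem_filter, Finset.mem_univ, true_and]
    exact and_comm
  rw [c1] at s1
  omega

end main


theorem even_count_crossings (n r : ℕ) (hn : 1 ≤ n) :
    Even (Finset.univ.filter
      (fun σ : Equiv.Perm (Fin (2 * n)) => crs σ = r)).card := by
  haveI : NeZero (2 * n) := ⟨by omega⟩
  refine even_card_of_invol Fmap _ _ le_rfl ?_ ?_ ?_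
  · intro σ hσ
    simp only [Finset.mem_filter, Finset.mem_univ, true_and] at hσ ⊢
    rw [crs_Fmap]
    exact hσ
  · intro σ _
    exact Fmap_invol σ
  · intro σ _ h
    set p0 : Fin (2 * n) := σ.symm 0 with hp0def
    have hp0 : σ p0 = 0 := σ.apply_symm_apply 0
    have h1 : Fmap σ p0 = σ p0 := by rw [h]
    rw [Fmap_apply, hp0, neg_eq_zero] at h1
    have h2 : Fin.rev p0 = p0 := by
      apply σ.injective
      rw [h1, hp0]
    have h3 := Fin.val_rev p0
    rw [h2] at h3
    have h4 := p0.isLt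
    omega
end
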